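/- arXiv:math/0606746 — 2 statements merged into one kernel-verified Lean document; each statement's English description precedes it below -/
import Mathlib

section
/- Let M = M(Σ,I) be a free partially commutative monoid with Σ finite and totally ordered. Then the sequence ⋯ → F_n →^{δ_n} ⋯ → F_2 →^{δ_2} F_1 →^{δ_1} F_0 = ℤM →^{ε} ℤ → 0 is exact; that is, it is a free resolution of the trivial right ℤM-module ℤ. -/
open scoped Classical

/-- The elementary commutation relation on words: `ab ~ ba` for `(a,b) ∈ I`. -/
def TraceRel {α : Type*} (I : α → α → Prop) : FreeMonoid α → FreeMonoid α → Prop :=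
  fun u v => ∃ a b, I a b ∧ u = FreeMonoid.of a * FreeMonoid.of b ∧
    v = FreeMonoid.of b * FreeMonoid.of a

/-- The congruence on the free monoid generated by the commutation relation. -/
def TraceCon {α : Type*} (I : α → α → Prop) : Con (FreeMonoid α) := conGen (TraceRel I)

/-- The free partially commutative monoid `M(Σ, I)`: the monoid presented by
generators `Σ` and relations `ab = ba` for `(a,b) ∈ I`. -/
abbrev TraceMonoid (α : Type*) (I : α → α → Prop) : Type _ := (TraceCon I).Quotient

/-- The canonical map `Σ* → M(Σ, I)` sending a word to its class. -/
def TraceMonoid.mk {α : Type*} (I : α → α → Prop) : FreeMonoid α →* TraceMonoid α I :=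
  Con.mk' _

/-- The projection `π_A : M(Σ, I) → M(A, I_A)` erasing all letters not in `A`. -/
noncomputable def TraceMonoid.proj {α : Type*} (I : α → α → Prop) (A : Set α) :
    TraceMonoid α I →* TraceMonoid A (fun a b => I a.1 b.1) :=
  Con.lift _ ((TraceMonoid.mk _).comp (FreeMonoid.lift fun c =>
    if h : c ∈ A then FreeMonoid.of (⟨c, h⟩ : A) else 1)) <| by
    refine Con.conGen_le.2 ?_
    rintro u v ⟨a, b, hI, rfl, rfl⟩
    simp only [Con.ker_rel, map_mul, MonoidHom.comp_apply, FreeMonoid.lift_eval_of]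
    by_cases ha : a ∈ A <;> by_cases hb : b ∈ A <;>
      simp only [ha, hb, dif_pos, dif_neg, not_false_iff, map_one, one_mul, mul_one]
    rw [← map_mul, ← map_mul]
    exact Quotient.sound (ConGen.Rel.of _ _ ⟨⟨a, ha⟩, ⟨b, hb⟩, hI, rfl, rfl⟩)

section PartA

variable {σ : Type*} [LinearOrder σ] {I : σ → σ → Prop}

/-- pair filter -/
def pfil (a b : σ) (w : List σ) : List σ := w.filter (fun c => c = a ∨ c = b)

/-- The projection invariant. -/
def PInv (I : σ → σ → Prop) (u v : List σ) : Prop :=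
  (∀ a, u.count a = v.count a) ∧ ∀ a b, ¬ I a b → pfil a b u = pfil a b v

theorem PInv.refl (u : List σ) : PInv I u u := ⟨fun _ => rfl, fun _ _ _ => rfl⟩

theorem PInv.symm' {u v : List σ} (h : PInv I u v) : PInv I v u :=
  ⟨fun a => (h.1 a).symm, fun a b hab => (h.2 a b hab).symm⟩

theorem PInv.trans' {u v w : List σ} (h : PInv I u v) (h' : PInv I v w) : PInv I u w :=
  ⟨fun a => (h.1 a).trans (h'.1 a), fun a b hab => (h.2 a b hab).trans (h'.2 a b hab)⟩

theorem pfil_append (a b : σ) (u v : List σ) :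
    pfil a b (u ++ v) = pfil a b u ++ pfil a b v := List.filter_append _ _

theorem PInv.append {u v u' v' : List σ} (h : PInv I u v) (h' : PInv I u' v') :
    PInv I (u ++ u') (v ++ v') := by
  refine ⟨fun a => ?_, fun a b hab => ?_⟩
  · simp [List.count_append, h.1 a, h'.1 a]
  · simp [pfil_append, h.2 a b hab, h'.2 a b hab]

/-- The invariant as a congruence. -/
def InvCon (I : σ → σ → Prop) [LinearOrder σ] : Con (FreeMonoid σ) where
  r u v := PInv I u.toList v.toList
  iseqv := ⟨fun u => PInv.refl _, PInv.symm', PInv.trans'⟩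
  mul' h h' := by simpa [FreeMonoid.toList_mul] using PInv.append h h'

theorem inv_of_con (hsym : Symmetric I) {u v : FreeMonoid σ}
    (h : TraceCon I u v) : PInv I u.toList v.toList := by
  refine (Con.conGen_le (c := InvCon I)).2 ?_ h
  rintro x y ⟨a, b, hI, rfl, rfl⟩
  have hne : a ≠ b ∨ a = b := ne_or_eq a b
  constructor
  · intro c
    simp [FreeMonoid.toList_mul, FreeMonoid.toList_of, List.count_cons, List.count_append]
    omega
  · intro x y hxy
    show pfil x y [a, b] = pfil x y [b, a]
    by_cases hab : a = b
    · subst hab; rfl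
    by_cases ha : a = x ∨ a = y <;> by_cases hb : b = x ∨ b = y <;>
      simp only [pfil, List.filter, ha, hb, decide_true, decide_false,
        decide_eq_true_eq, if_pos, if_neg] <;> try simp [ha, hb]
    exfalso
    rcases ha with rfl | rfl <;> rcases hb with rfl | rfl
    · exact hab rfl
    · exact hxy hI
    · exact hxy (hsym hI)
    · exact hab rfl

end PartA

section PartA2
variable {σ : Type*} [LinearOrder σ] {I : σ → σ → Prop}

theorem ofList_cons (x : σ) (l : List σ) :
    FreeMonoid.ofList (x :: l) = FreeMonoid.of x * FreeMonoid.ofList l := rfl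

theorem con_swapAll {p s : List σ} {a : σ} (h : ∀ x ∈ p, I x a) :
    TraceCon I (FreeMonoid.ofList (p ++ a :: s)) (FreeMonoid.ofList (a :: (p ++ s))) := by
  induction p with
  | nil => exact (TraceCon I).refl _
  | cons x p' ih =>
    have h1 : TraceCon I (FreeMonoid.ofList (x :: (p' ++ a :: s)))
        (FreeMonoid.ofList (x :: a :: (p' ++ s))) := by
      have := (TraceCon I).mul ((TraceCon I).refl (FreeMonoid.of x)) (ih (fun y hy => h y (List.mem_cons_of_mem _ hy)))
      simpa [ofList_cons] using this
    have h2 : TraceCon I (FreeMonoid.ofList (x :: a :: (p' ++ s)))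
        (FreeMonoid.ofList (a :: x :: (p' ++ s))) := by
      have hswap : TraceCon I (FreeMonoid.of x * FreeMonoid.of a)
          (FreeMonoid.of a * FreeMonoid.of x) :=
        ConGen.Rel.of _ _ ⟨x, a, h x (List.mem_cons_self), rfl, rfl⟩
      have := (TraceCon I).mul hswap ((TraceCon I).refl (FreeMonoid.ofList (p' ++ s)))
      simpa [ofList_cons, FreeMonoid.ofList_append, mul_assoc] using this
    exact (TraceCon I).trans h1 h2

theorem exists_split {a : σ} {v : List σ} (h : a ∈ v) :
    ∃ p s, v = p ++ a :: s ∧ a ∉ p := by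
  induction v with
  | nil => simp at h
  | cons b v' ih =>
    by_cases hb : a = b
    · exact ⟨[], v', by simp [hb], by simp⟩
    · rcases ih (by rcases List.mem_cons.1 h with h | h; exact absurd h hb; exact h) with ⟨p, s, rfl, hp⟩
      exact ⟨b :: p, s, rfl, by simp [hp, hb]⟩

theorem head_pfil_mem {a b : σ} {l : List σ} (h : pfil a b l ≠ []) :
    ∃ x, (pfil a b l).head? = some x ∧ x ∈ l ∧ (x = a ∨ x = b) := by
  rcases hl : pfil a b l with _ | ⟨x, t⟩
  · exact absurd hl h
  · refine ⟨x, rfl, ?_, ?_⟩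
    · have : x ∈ pfil a b l := by rw [hl]; exact List.mem_cons_self
      exact List.mem_of_mem_filter this
    · have : x ∈ pfil a b l := by rw [hl]; exact List.mem_cons_self
      have := List.of_mem_filter this
      simpa using this

theorem pfil_cons_pos {a b x : σ} (l : List σ) (h : x = a ∨ x = b) :
    pfil a b (x :: l) = x :: pfil a b l := by
  simp [pfil, List.filter, h]

theorem pfil_cons_neg {a b x : σ} (l : List σ) (h : ¬(x = a ∨ x = b)) :
    pfil a b (x :: l) = pfil a b l := by
  simp [pfil, List.filter, h]

theorem pfil_eq_nil {a b : σ} {l : List σ} (h : ∀ x ∈ l, ¬(x = a ∨ x = b)) :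
    pfil a b l = [] := by
  simp only [pfil, List.filter_eq_nil_iff]
  intro x hx
  simpa using h x hx

theorem con_of_inv (hsym : Symmetric I) :
    ∀ n (u v : List σ), u.length ≤ n → PInv I u v →
      TraceCon I (FreeMonoid.ofList u) (FreeMonoid.ofList v) := by
  intro n
  induction n with
  | zero =>
    intro u v hu hinv
    have hu0 : u = [] := List.eq_nil_of_length_eq_zero (Nat.le_zero.1 hu)
    subst hu0
    have : v = [] := by
      by_contra hv
      rcases List.exists_mem_of_ne_nil v hv with ⟨x, hx⟩
      have hc := (hinv.1 x).symm
      simp at hc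
      have := List.count_pos_iff.2 hx
      omega
    rw [this]
    exact (TraceCon I).refl _
  | succ n ih =>
    intro u v hu hinv
    match u with
    | [] =>
      have : v = [] := by
        by_contra hv
        rcases List.exists_mem_of_ne_nil v hv with ⟨x, hx⟩
        have hc := (hinv.1 x).symm
        simp at hc
        have := List.count_pos_iff.2 hx
        omega
      rw [this]
      exact (TraceCon I).refl _
    | a :: u' =>
      have hav : a ∈ v := by
        have := hinv.1 a
        simp [List.count_cons_self] at this
        have : 0 < v.count a := by omega
        exact List.count_pos_iff.1 this
      rcases exists_split hav with ⟨p, s, rfl, hap⟩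
      -- every letter of p commutes with a
      have hcomm : ∀ x ∈ p, I x a := by
        intro x hxp
        by_contra hxa
        have hax : ¬ I a x := fun h => hxa (hsym h)
        have hne : x ≠ a := fun h => hap (h ▸ hxp)
        have hfil := hinv.2 a x hax
        rw [pfil_cons_pos u' (Or.inl rfl)] at hfil
        rw [pfil_append] at hfil
        have hpne : pfil a x p ≠ [] := by
          intro hnil
          have : x ∈ pfil a x p := by
            simp [pfil, List.mem_filter]
            exact hxp
          rw [hnil] at this; simp at this
        rcases head_pfil_mem hpne with ⟨y, hy1, hy2, hy3⟩
        have hya : y ≠ a := fun h => hap (h ▸ hy2)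
        have hyx : y = x := by rcases hy3 with h | h; exact absurd h hya; exact h
        have hL : (a :: pfil a x u').head? = (pfil a x p ++ pfil a x (a :: s)).head? := by
          rw [hfil]
        rw [List.head?_append] at hL
        rw [hy1] at hL
        simp at hL
        exact hya hL.symm
      -- v ~ a :: (p ++ s)
      have hv1 : TraceCon I (FreeMonoid.ofList (p ++ a :: s)) (FreeMonoid.ofList (a :: (p ++ s))) :=
        con_swapAll hcomm
      -- PInv u' (p ++ s)
      have hinv' : PInv I u' (p ++ s) := by
        constructor
        · intro c
          have := hinv.1 c
          simp [List.count_cons, List.count_append] at this ⊢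
          omega
        · intro x y hxy
          have hfil := hinv.2 x y hxy
          by_cases hax : a = x ∨ a = y
          · -- the other letter of the pair is not in p, a not in p
            have hnp : ∀ z ∈ p, ¬(z = x ∨ z = y) := by
              intro z hzp hz
              have hza : z ≠ a := fun h => hap (h ▸ hzp)
              have hIza : I z a := hcomm z hzp
              rcases hax with rfl | rfl
              · rcases hz with rfl | rfl
                · exact hza rfl
                · exact hxy (hsym hIza)
              · rcases hz with rfl | rfl
                · exact hxy hIza
                · exact hza rfl
            have hp0 : pfil x y p = [] := pfil_eq_nil hnp
            rw [pfil_cons_pos u' (by tauto), pfil_append, hp0,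
              pfil_cons_pos s (by tauto)] at hfil
            rw [pfil_append, hp0]
            simpa using hfil
          · rw [pfil_cons_neg u' hax, pfil_append, pfil_cons_neg s hax] at hfil
            rw [pfil_append]
            exact hfil
      have hu' : TraceCon I (FreeMonoid.ofList u') (FreeMonoid.ofList (p ++ s)) := by
        apply ih
        · simpa using Nat.lt_succ_iff.1 (Nat.lt_of_lt_of_le (by simp) hu)
        · exact hinv'
      have : TraceCon I (FreeMonoid.ofList (a :: u')) (FreeMonoid.ofList (a :: (p ++ s))) := by
        have := (TraceCon I).mul ((TraceCon I).refl (FreeMonoid.of a)) hu'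
        simpa [ofList_cons] using this
      exact (TraceCon I).trans this ((TraceCon I).symm hv1)

end PartA2

section PartA3
variable {σ : Type*} [LinearOrder σ] {I : σ → σ → Prop}

/-- class of a single letter -/
def mkof (I : σ → σ → Prop) (a : σ) : TraceMonoid σ I := TraceMonoid.mk I (FreeMonoid.of a)

def mkl (I : σ → σ → Prop) (w : List σ) : TraceMonoid σ I :=
  TraceMonoid.mk I (FreeMonoid.ofList w)

theorem mkl_nil : mkl I [] = 1 := rfl

theorem mkl_cons (a : σ) (w : List σ) : mkl I (a :: w) = mkof I a * mkl I w := by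
  simp [mkl, mkof, ofList_cons, map_mul]

theorem mkl_append (u v : List σ) : mkl I (u ++ v) = mkl I u * mkl I v := by
  simp [mkl, FreeMonoid.ofList_append, map_mul]

theorem exists_word (t : TraceMonoid σ I) : ∃ w : List σ, t = mkl I w := by
  rcases Con.mk'_surjective t with ⟨u, hu⟩
  exact ⟨u.toList, by rw [← hu]; rfl⟩

theorem mkl_eq_iff (hsym : Symmetric I) {u v : List σ} :
    mkl I u = mkl I v ↔ PInv I u v := by
  constructor
  · intro h
    have : TraceCon I (FreeMonoid.ofList u) (FreeMonoid.ofList v) := (Con.eq _).1 h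
    simpa using inv_of_con hsym this
  · intro h
    exact (Con.eq _).2 (con_of_inv hsym u.length u v le_rfl h)

/-- length of a trace -/
def tlen (t : TraceMonoid σ I) : ℕ :=
  Multiplicative.toAdd <| Con.lift (TraceCon I)
    (⟨⟨fun w => Multiplicative.ofAdd w.toList.length, rfl⟩,
      fun u v => by
        simp only [FreeMonoid.toList_mul, List.length_append]
        rfl⟩ : FreeMonoid σ →* Multiplicative ℕ)
    (Con.conGen_le.2 (by rintro x y ⟨a, b, hI, rfl, rfl⟩; rfl)) t

theorem tlen_mkl (w : List σ) : tlen (mkl I w) = w.length := rfl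

theorem tlen_mul (s t : TraceMonoid σ I) : tlen (s * t) = tlen s + tlen t := by
  rcases exists_word s with ⟨u, rfl⟩
  rcases exists_word t with ⟨v, rfl⟩
  rw [← mkl_append, tlen_mkl, tlen_mkl, tlen_mkl, List.length_append]

theorem tlen_one : tlen (1 : TraceMonoid σ I) = 0 := rfl

theorem tlen_mkof (a : σ) : tlen (mkof I a) = 1 := rfl

theorem eq_one_of_tlen_eq_zero {t : TraceMonoid σ I} (h : tlen t = 0) : t = 1 := by
  rcases exists_word t with ⟨w, rfl⟩
  rw [tlen_mkl] at h
  rw [List.eq_nil_of_length_eq_zero h]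
  rfl

theorem cancel_of (hsym : Symmetric I) {a : σ} {x y : TraceMonoid σ I}
    (h : mkof I a * x = mkof I a * y) : x = y := by
  rcases exists_word x with ⟨u, rfl⟩
  rcases exists_word y with ⟨v, rfl⟩
  rw [← mkl_cons, ← mkl_cons] at h
  have h' := (mkl_eq_iff hsym).1 h
  apply (mkl_eq_iff hsym).2
  constructor
  · intro c
    have := h'.1 c
    simp [List.count_cons] at this
    omega
  · intro x y hxy
    have := h'.2 x y hxy
    by_cases hax : a = x ∨ a = y
    · rw [pfil_cons_pos u hax, pfil_cons_pos v hax] at this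
      exact (List.cons.inj this).2
    · rwa [pfil_cons_neg u hax, pfil_cons_neg v hax] at this

theorem cancel_left (hsym : Symmetric I) {w x y : TraceMonoid σ I}
    (h : w * x = w * y) : x = y := by
  rcases exists_word w with ⟨u, rfl⟩
  induction u with
  | nil => simpa [mkl_nil] using h
  | cons a u' ih =>
    rw [mkl_cons, mul_assoc, mul_assoc] at h
    exact ih (cancel_of hsym h)

/-- P2: two distinct initial letters commute and have a common extension. -/
theorem init_pair (hsym : Symmetric I) {a b : σ} (hab : a ≠ b) {x y : TraceMonoid σ I}
    (h : mkof I a * x = mkof I b * y) :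
    I a b ∧ ∃ w, x = mkof I b * w ∧ y = mkof I a * w := by
  rcases exists_word x with ⟨u, rfl⟩
  rcases exists_word y with ⟨v, rfl⟩
  rw [← mkl_cons, ← mkl_cons] at h
  have h' := (mkl_eq_iff hsym).1 h
  have hIab : I a b := by
    by_contra hIab
    have := h'.2 a b hIab
    rw [pfil_cons_pos u (Or.inl rfl), pfil_cons_pos v (Or.inr rfl)] at this
    exact hab (List.cons.inj this).1
  refine ⟨hIab, ?_⟩
  have hbu : b ∈ u := by
    have := h'.1 b
    simp [List.count_cons, hab] at this
    have : 0 < u.count b := by omega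
    exact List.count_pos_iff.1 this
  rcases exists_split hbu with ⟨p, s, rfl, hbp⟩
  have hcomm : ∀ z ∈ p, I z b := by
    intro z hzp
    by_cases hza : z = a
    · exact hza ▸ hIab
    by_contra hzb
    have hbz : ¬ I b z := fun hh => hzb (hsym hh)
    have hfil := h'.2 b z hbz
    have hzne : z ≠ b := fun hh => hbp (hh ▸ hzp)
    rw [pfil_cons_neg _ (by tauto), pfil_cons_pos _ (Or.inl rfl)] at hfil
    -- hfil : pfil b z (p ++ b :: s) = b :: pfil b z v
    rw [pfil_append] at hfil
    have hpne : pfil b z p ≠ [] := by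
      intro hnil
      have : z ∈ pfil b z p := by simp [pfil, List.mem_filter]; exact hzp
      rw [hnil] at this; simp at this
    rcases head_pfil_mem hpne with ⟨w, hw1, hw2, hw3⟩
    have hwb : w ≠ b := fun hh => hbp (hh ▸ hw2)
    have hL : (pfil b z p ++ pfil b z (b :: s)).head? = (b :: pfil b z v).head? := by rw [hfil]
    rw [List.head?_append, hw1] at hL
    simp at hL
    exact hwb hL
  have hu : TraceCon I (FreeMonoid.ofList (p ++ b :: s)) (FreeMonoid.ofList (b :: (p ++ s))) :=
    con_swapAll hcomm
  have hu' : mkl I (p ++ b :: s) = mkof I b * mkl I (p ++ s) := by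
    have := (Con.eq (TraceCon I)).2 hu
    rw [show (↑(FreeMonoid.ofList (p ++ b :: s)) : TraceMonoid σ I) = mkl I (p ++ b :: s) from rfl,
      show (↑(FreeMonoid.ofList (b :: (p ++ s))) : TraceMonoid σ I) = mkl I (b :: (p ++ s)) from rfl] at this
    rw [this, mkl_cons]
  refine ⟨mkl I (p ++ s), hu', ?_⟩
  rw [mkl_cons, mkl_cons, hu'] at h
  have hcm : mkof I a * mkof I b = mkof I b * mkof I a := by
    exact (Con.eq _).2 (ConGen.Rel.of _ _ ⟨a, b, hIab, rfl, rfl⟩)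
  rw [← mul_assoc, hcm, mul_assoc] at h
  exact (cancel_of hsym h).symm

end PartA3

section PartA4
variable {σ : Type*} [LinearOrder σ] {I : σ → σ → Prop}

/-- `a` is an initial letter of `t`. -/
def Init (I : σ → σ → Prop) (a : σ) (t : TraceMonoid σ I) : Prop :=
  ∃ u, t = mkof I a * u

theorem init_comm (hsym : Symmetric I) {a b : σ} {t : TraceMonoid σ I}
    (ha : Init I a t) (hb : Init I b t) (hab : a ≠ b) : I a b := by
  rcases ha with ⟨u, rfl⟩
  rcases hb with ⟨v, hv⟩
  exact (init_pair hsym hab hv).1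

theorem init_of_ne_one {t : TraceMonoid σ I} (h : t ≠ 1) : ∃ a, Init I a t := by
  rcases exists_word t with ⟨w, rfl⟩
  match w with
  | [] => exact absurd rfl h
  | a :: w' => exact ⟨a, mkl I w', mkl_cons a w'⟩

theorem init_tail (hsym : Symmetric I) {a b : σ} (hab : a ≠ b) {u t : TraceMonoid σ I}
    (h : t = mkof I a * u) (hb : Init I b t) : Init I b u := by
  rcases hb with ⟨v, hv⟩
  rcases init_pair hsym hab (h ▸ hv : mkof I a * u = mkof I b * v) with ⟨_, w, hw, _⟩
  exact ⟨w, hw⟩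

theorem mkof_commute {a b : σ} (h : I a b) :
    Commute (mkof I a) (mkof I b) :=
  (Con.eq _).2 (ConGen.Rel.of _ _ ⟨a, b, h, rfl, rfl⟩)

/-- the product of a pairwise-commuting finite set of letters -/
def clF (s : Finset σ) (hs : (↑s : Set σ).Pairwise I) : TraceMonoid σ I :=
  s.noncommProd (fun a => mkof I a) (fun a ha b hb hab => mkof_commute (hs ha hb hab))

theorem clF_congr {s s' : Finset σ} (h : s = s') (hs : (↑s : Set σ).Pairwise I) :
    clF s hs = clF s' (h ▸ hs) := by subst h; rfl

theorem clF_insert {s : Finset σ} {a : σ} (ha : a ∉ s)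
    (hs : (↑(insert a s) : Set σ).Pairwise I) :
    clF (insert a s) hs = mkof I a * clF s (hs.mono (by simp)) :=
  Finset.noncommProd_insert_of_notMem _ _ _ _ ha

theorem clF_erase {s : Finset σ} {a : σ} (ha : a ∈ s) (hs : (↑s : Set σ).Pairwise I) :
    clF s hs = mkof I a * clF (s.erase a) (hs.mono (by simp [Finset.erase_subset])) := by
  have h1 : s = insert a (s.erase a) := (Finset.insert_erase ha).symm
  rw [clF_congr h1 hs, clF_insert (Finset.notMem_erase a s)]

theorem clF_commute {s : Finset σ} (hs : (↑s : Set σ).Pairwise I) {y : TraceMonoid σ I}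
    (h : ∀ x ∈ s, Commute y (mkof I x)) : Commute y (clF s hs) :=
  Finset.noncommProd_commute _ _ _ _ h

theorem tlen_clF {s : Finset σ} (hs : (↑s : Set σ).Pairwise I) :
    tlen (clF s hs) = s.card := by
  classical
  induction s using Finset.induction_on with
  | empty => rw [show clF (∅ : Finset σ) hs = 1 from Finset.noncommProd_empty _ _, tlen_one, Finset.card_empty]
  | @insert a s ha ih =>
    rw [clF_insert ha, tlen_mul, tlen_mkof, ih, Finset.card_insert_of_notMem ha]; omega

theorem init_clF_mul {s : Finset σ} (hs : (↑s : Set σ).Pairwise I) {a : σ} (ha : a ∈ s)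
    (m : TraceMonoid σ I) : Init I a (clF s hs * m) :=
  ⟨clF (s.erase a) (hs.mono (by simp [Finset.erase_subset])) * m, by
    rw [clF_erase ha hs, mul_assoc]⟩

theorem exists_extract (hsym : Symmetric I) {s : Finset σ} (hs : (↑s : Set σ).Pairwise I)
    {t : TraceMonoid σ I} (h : ∀ a ∈ s, Init I a t) :
    ∃ m, t = clF s hs * m := by
  classical
  induction s using Finset.induction_on generalizing t with
  | empty => exact ⟨t, by rw [show clF (∅ : Finset σ) hs = 1 from Finset.noncommProd_empty _ _, one_mul]⟩
  | @insert a s ha ih =>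
    rcases h a (Finset.mem_insert_self a s) with ⟨u, hu⟩
    have hInitu : ∀ b ∈ s, Init I b u := by
      intro b hb
      have hab : a ≠ b := fun hh => ha (hh ▸ hb)
      exact init_tail hsym hab hu (h b (Finset.mem_insert_of_mem hb))
    rcases ih (hs.mono (by simp)) hInitu with ⟨m, hm⟩
    exact ⟨m, by rw [clF_insert ha hs, hu, hm, mul_assoc]⟩

end PartA4


noncomputable section Resolution

variable {σ : Type*} [LinearOrder σ]

/-- The monoid ring `ℤM` of the free partially commutative monoid `M = M(Σ, I)`. -/
abbrev RM (σ : Type*) (I : σ → σ → Prop) : Type _ := MonoidAlgebra ℤ (TraceMonoid σ I)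

/-- The image of a generator `a ∈ Σ` in the monoid ring `ℤM`. -/
def gen (I : σ → σ → Prop) (a : σ) : RM σ I :=
  MonoidAlgebra.of ℤ (TraceMonoid σ I) (TraceMonoid.mk I (FreeMonoid.of a))

/-- A `k`-clique: a set of `k` distinct pairwise commuting letters of `Σ`
(a complete subgraph with `k` vertices of the graph `Γ(M)`). -/
def Clique (I : σ → σ → Prop) (k : ℕ) : Type _ :=
  {s : Finset σ // s.card = k ∧ (↑s : Set σ).Pairwise I}

/-- `elt c j` is the element `a_{j+1}` of the clique `{a₁ < a₂ < ⋯ < a_k}`. -/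
def elt {I : σ → σ → Prop} {k : ℕ} (c : Clique I k) (j : Fin k) : σ :=
  (c.1.orderIsoOfFin c.2.1 j : σ)

theorem elt_mem {I : σ → σ → Prop} {k : ℕ} (c : Clique I k) (j : Fin k) :
    elt c j ∈ c.1 := (c.1.orderIsoOfFin c.2.1 j).2

/-- The clique obtained by deleting the `(j+1)`-st element. -/
def erased {I : σ → σ → Prop} {k : ℕ} (c : Clique I (k + 1)) (j : Fin (k + 1)) :
    Clique I k :=
  ⟨c.1.erase (elt c j), by
    refine ⟨?_, ?_⟩
    · rw [Finset.card_erase_of_mem (elt_mem c j), c.2.1]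
      omega
    · exact Set.Pairwise.mono (by
        intro a ha
        exact Finset.mem_of_mem_erase (by exact_mod_cast ha)) c.2.2⟩

/-- `F_k`, the free right `ℤM`-module with one basis element for each `k`-clique. -/
abbrev F (I : σ → σ → Prop) (k : ℕ) : Type _ := Clique I k →₀ RM σ I

/-- The boundary homomorphism `δ_{k+1} : F_{k+1} → F_k` of right `ℤM`-modules,
`δ [a₁…a_{k+1}] = Σⱼ (−1)^{j-1} [a₁… â_j …a_{k+1}] (a_j − 1)`. -/
def del (I : σ → σ → Prop) (k : ℕ) : F I (k + 1) →ₗ[(RM σ I)ᵐᵒᵖ] F I k :=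
  Finsupp.lsum ℕ fun c => ∑ j : Fin (k + 1),
    (Finsupp.lsingle (erased c j)).comp
      (LinearMap.mulLeft (RM σ I)ᵐᵒᵖ ((-1 : RM σ I) ^ (j : ℕ) * (gen I (elt c j) - 1)))

/-- The empty clique. -/
def emptyClique (I : σ → σ → Prop) : Clique I 0 := ⟨∅, by simp⟩

/-- The augmentation `ε : F₀ = ℤM → ℤ`, `ε(a) = 1` for every `a ∈ Σ`
(`F₀` is the free module on the single `0`-clique, canonically `ℤM` itself). -/
def aug (I : σ → σ → Prop) : F I 0 → ℤ := fun x =>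
  MonoidAlgebra.lift ℤ ℤ (TraceMonoid σ I) 1 (x (emptyClique I))

end Resolution


noncomputable section PartB

variable {σ : Type*} [LinearOrder σ] (I : σ → σ → Prop)

/-- basis element of `F I k` -/
def be {k : ℕ} (c : Clique I k) (t : TraceMonoid σ I) : F I k :=
  Finsupp.single c (MonoidAlgebra.single t (1 : ℤ))

/-- ℤ-linear map out of `F I k` defined on the ℤ-basis -/
def MB {k k' : ℕ} (g : Clique I k → TraceMonoid σ I → F I k') : F I k →ₗ[ℤ] F I k' :=
  Finsupp.lsum ℤ fun c => (Finsupp.lsum ℤ fun t => LinearMap.toSpanSingleton ℤ (F I k') (g c t)) ∘ₗ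
    (MonoidAlgebra.coeffLinearEquiv ℤ).toLinearMap

theorem MB_single {k k' : ℕ} (g : Clique I k → TraceMonoid σ I → F I k')
    (c : Clique I k) (t : TraceMonoid σ I) (z : ℤ) :
    MB I g (Finsupp.single c (MonoidAlgebra.single t z)) = z • g c t := by
  rw [MB, Finsupp.lsum_single, LinearMap.comp_apply]
  exact Finsupp.lsum_single ℤ _ t z

theorem MB_be {k k' : ℕ} (g : Clique I k → TraceMonoid σ I → F I k')
    (c : Clique I k) (t : TraceMonoid σ I) :
    MB I g (be I c t) = g c t := by
  rw [be, MB_single, one_smul]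

/-- the coefficient appearing in `del` -/
def cf {k : ℕ} (c : Clique I k) (j : Fin k) : RM σ I :=
  (-1 : RM σ I) ^ (j : ℕ) * (gen I (elt c j) - 1)

theorem del_single {k : ℕ} (c : Clique I (k+1)) (r : RM σ I) :
    del I k (Finsupp.single c r) =
      ∑ j : Fin (k+1), Finsupp.single (erased c j) (cf I c j * r) := by
  rw [del, Finsupp.lsum_single, LinearMap.sum_apply]
  rfl

theorem mkof_eq (a : σ) : TraceMonoid.mk I (FreeMonoid.of a) = mkof I a := rfl

theorem gen_eq (a : σ) : gen I a = MonoidAlgebra.single (mkof I a) (1 : ℤ) := rfl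

theorem cf_mul_single {k : ℕ} (c : Clique I k) (j : Fin k) (t : TraceMonoid σ I) (z : ℤ) :
    cf I c j * MonoidAlgebra.single t z =
      ((-1 : ℤ) ^ (j : ℕ)) •
        (MonoidAlgebra.single (mkof I (elt c j) * t) z - MonoidAlgebra.single t z) := by
  rw [cf, mul_assoc, sub_mul, gen_eq, MonoidAlgebra.single_mul_single, one_mul, one_mul]
  have hcast : ((-1 : RM σ I) ^ (j : ℕ)) = (((-1 : ℤ) ^ (j:ℕ) : ℤ) : RM σ I) := by push_cast; ring
  rw [hcast, ← zsmul_eq_mul]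

/-- the "leading" part of the differential -/
def d0 (k : ℕ) : F I (k+1) →ₗ[ℤ] F I k :=
  MB I fun c t => ∑ j : Fin (k+1),
    ((-1 : ℤ) ^ (j : ℕ)) • be I (erased c j) (mkof I (elt c j) * t)

/-- the "lower" part of the differential -/
def d1 (k : ℕ) : F I (k+1) →ₗ[ℤ] F I k :=
  MB I fun c t => ∑ j : Fin (k+1), ((-1 : ℤ) ^ (j : ℕ)) • be I (erased c j) t

theorem single_sub' {k : ℕ} (c : Clique I k) (r r' : RM σ I) :
    Finsupp.single c (r - r') = Finsupp.single c r - Finsupp.single c r' :=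
  Finsupp.single_sub c r r'

theorem del_eq_d0_sub_d1 {k : ℕ} (x : F I (k+1)) :
    del I k x = d0 I k x - d1 I k x := by
  have hsing : ∀ (c : Clique I (k+1)) (r : RM σ I), del I k (Finsupp.single c r)
      = d0 I k (Finsupp.single c r) - d1 I k (Finsupp.single c r) := by
    intro c r
    induction r using MonoidAlgebra.induction with
    | zero => simp
    | single_add t z g _ _ ihr =>
      rw [Finsupp.single_add, map_add, map_add, map_add, ihr, del_single,
        d0, d1, MB_single, MB_single]
      have key : ∀ j : Fin (k+1),
          Finsupp.single (erased c j) (cf I c j * MonoidAlgebra.single t z)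
          = z • (((-1 : ℤ) ^ (j:ℕ)) • be I (erased c j) (mkof I (elt c j) * t))
            - z • (((-1 : ℤ) ^ (j:ℕ)) • be I (erased c j) t) := by
        intro j
        rw [cf_mul_single]
        simp only [be, Finsupp.smul_single, smul_sub, Finsupp.single_sub]
        congr 2 <;> rw [MonoidAlgebra.smul_single', MonoidAlgebra.smul_single',
          MonoidAlgebra.smul_single'] <;> ring_nf
      rw [Finset.sum_congr rfl (fun j _ => key j), Finset.sum_sub_distrib,
        ← Finset.smul_sum, ← Finset.smul_sum]
      abel
  induction x using Finsupp.induction with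
  | zero => simp
  | single_add c r f _ _ ih =>
    rw [map_add, map_add, map_add, ih, hsing]
    abel

end PartB



section PartB2
variable {σ : Type*} [LinearOrder σ] (I : σ → σ → Prop)

/-- position index of `a` in a finset -/
def idx (s : Finset σ) (a : σ) : ℕ := (s.filter (· < a)).card

theorem elt_inj {k : ℕ} (c : Clique I k) : Function.Injective (elt c) := by
  intro i j h
  have := (c.1.orderIsoOfFin c.2.1).injective (Subtype.ext h)
  exact this

theorem elt_lt_iff {k : ℕ} (c : Clique I k) {i j : Fin k} :
    elt c i < elt c j ↔ i < j := by
  constructor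
  · intro h
    by_contra hij
    rcases lt_or_eq_of_le (not_lt.1 hij) with h' | h'
    · exact absurd ((c.1.orderIsoOfFin c.2.1).lt_iff_lt.2 h') (not_lt.2 (le_of_lt h))
    · rw [h'] at h; exact lt_irrefl _ h
  · intro h
    exact (c.1.orderIsoOfFin c.2.1).lt_iff_lt.2 h

theorem elt_surj {k : ℕ} (c : Clique I k) {a : σ} (ha : a ∈ c.1) :
    ∃ j, elt c j = a :=
  ⟨(c.1.orderIsoOfFin c.2.1).symm ⟨a, ha⟩,
    congrArg Subtype.val ((c.1.orderIsoOfFin c.2.1).apply_symm_apply ⟨a, ha⟩)⟩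

theorem idx_elt {k : ℕ} (c : Clique I k) (j : Fin k) : idx c.1 (elt c j) = (j : ℕ) := by
  have himg : c.1.filter (· < elt c j) = (Finset.Iio j).image (fun i => elt c i) := by
    ext a
    simp only [Finset.mem_filter, Finset.mem_image, Finset.mem_Iio]
    constructor
    · rintro ⟨ham, hlt⟩
      rcases elt_surj I c ham with ⟨i, rfl⟩
      exact ⟨i, (elt_lt_iff I c).1 hlt, rfl⟩
    · rintro ⟨i, hij, rfl⟩
      exact ⟨elt_mem c i, (elt_lt_iff I c).2 hij⟩
  rw [idx, himg, Finset.card_image_of_injective _ (elt_inj I c), Fin.card_Iio]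

/-- clique with an element erased, given by membership -/
def erC {k : ℕ} (c : Clique I (k+1)) (a : σ) (ha : a ∈ c.1) : Clique I k :=
  ⟨c.1.erase a, by
    refine ⟨?_, c.2.2.mono (by simp [Finset.erase_subset])⟩
    rw [Finset.card_erase_of_mem ha, c.2.1]; omega⟩

theorem erased_eq_erC {k : ℕ} (c : Clique I (k+1)) (j : Fin (k+1)) :
    erased c j = erC I c (elt c j) (elt_mem c j) := Subtype.ext rfl

/-- total summand for `d0` -/
noncomputable def Dt {k : ℕ} (c : Clique I (k+1)) (t : TraceMonoid σ I) (a : σ) : F I k :=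
  if h : a ∈ c.1 then ((-1 : ℤ) ^ idx c.1 a) • be I (erC I c a h) (mkof I a * t) else 0

/-- total summand for `d1` -/
noncomputable def Dt' {k : ℕ} (c : Clique I (k+1)) (t : TraceMonoid σ I) (a : σ) : F I k :=
  if h : a ∈ c.1 then ((-1 : ℤ) ^ idx c.1 a) • be I (erC I c a h) t else 0

theorem sum_fin_to_finset {k : ℕ} (c : Clique I k) {β : Type*} [AddCommMonoid β]
    (f : σ → β) : ∑ j : Fin k, f (elt c j) = ∑ a ∈ c.1, f a := by
  apply Finset.sum_nbij (i := fun j => elt c j)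
  · intro j _; exact elt_mem c j
  · intro i _ j _ h; exact elt_inj I c h
  · intro a ha
    rcases elt_surj I c ha with ⟨j, rfl⟩
    exact ⟨j, Finset.mem_univ j, rfl⟩
  · intro j _; rfl

theorem d0_be {k : ℕ} (c : Clique I (k+1)) (t : TraceMonoid σ I) :
    d0 I k (be I c t) = ∑ a ∈ c.1, Dt I c t a := by
  rw [d0, MB_be, ← sum_fin_to_finset I c (Dt I c t)]
  apply Finset.sum_congr rfl
  intro j _
  rw [Dt]
  rw [dif_pos (elt_mem c j), idx_elt, erased_eq_erC]

theorem d1_be {k : ℕ} (c : Clique I (k+1)) (t : TraceMonoid σ I) :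
    d1 I k (be I c t) = ∑ a ∈ c.1, Dt' I c t a := by
  rw [d1, MB_be, ← sum_fin_to_finset I c (Dt' I c t)]
  apply Finset.sum_congr rfl
  intro j _
  rw [Dt']
  rw [dif_pos (elt_mem c j), idx_elt, erased_eq_erC]

theorem idx_erase_of_lt {s : Finset σ} {a b : σ} (ha : a ∈ s) (hab : a < b) :
    idx (s.erase a) b + 1 = idx s b := by
  have hmem : a ∈ s.filter (· < b) := Finset.mem_filter.2 ⟨ha, hab⟩
  rw [idx, idx, Finset.filter_erase, Finset.card_erase_of_mem hmem]
  have : 0 < (s.filter (· < b)).card := Finset.card_pos.2 ⟨a, hmem⟩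
  omega

theorem idx_erase_of_ge {s : Finset σ} {a b : σ} (hab : ¬ a < b) :
    idx (s.erase a) b = idx s b := by
  rw [idx, idx, Finset.filter_erase, Finset.erase_eq_of_notMem]
  intro hmem
  exact hab (Finset.mem_filter.1 hmem).2

theorem sgn_antisym {s : Finset σ} {a b : σ} (ha : a ∈ s) (hb : b ∈ s) (hab : a ≠ b) :
    ((-1 : ℤ) ^ idx s a) * ((-1 : ℤ) ^ idx (s.erase a) b)
      = -(((-1 : ℤ) ^ idx s b) * ((-1 : ℤ) ^ idx (s.erase b) a)) := by
  have key : ∀ x y : σ, x ∈ s → x < y →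
      ((-1 : ℤ) ^ idx s x) * ((-1 : ℤ) ^ idx (s.erase x) y)
        = -(((-1 : ℤ) ^ idx s y) * ((-1 : ℤ) ^ idx (s.erase y) x)) := by
    intro x y hx hxy
    rw [idx_erase_of_ge (not_lt.2 (le_of_lt hxy)), ← idx_erase_of_lt hx hxy]
    ring
  rcases lt_or_gt_of_ne hab with h | h
  · exact key a b ha h
  · rw [key b a hb h]; ring

end PartB2



noncomputable section PartB3
variable {σ : Type*} [LinearOrder σ] (I : σ → σ → Prop)

/-- product of a clique in the trace monoid -/
def clC {k : ℕ} (c : Clique I k) : TraceMonoid σ I := clF c.1 c.2.2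

theorem clC_erC {k : ℕ} (c : Clique I (k+1)) {a : σ} (ha : a ∈ c.1) :
    clC I c = mkof I a * clC I (erC I c a ha) := clF_erase ha c.2.2

/-- signed coefficient -/
def cfa (s : Finset σ) (a : σ) : RM σ I := ((-1 : ℤ) ^ idx s a) • (gen I a - 1)

theorem cf_eq_cfa {k : ℕ} (c : Clique I k) (j : Fin k) :
    cf I c j = cfa I c.1 (elt c j) := by
  rw [cf, cfa, idx_elt]
  have hcast : ((-1 : RM σ I) ^ (j : ℕ)) = (((-1 : ℤ) ^ (j:ℕ) : ℤ) : RM σ I) := by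
    push_cast; ring
  rw [hcast, ← zsmul_eq_mul]

theorem gen_commute {a b : σ} (h : I a b) :
    Commute (gen I a - 1) (gen I b - 1) := by
  have hg : Commute (gen I a) (gen I b) := by
    rw [Commute, SemiconjBy, gen_eq, gen_eq, MonoidAlgebra.single_mul_single,
      MonoidAlgebra.single_mul_single, (mkof_commute h).eq]
  exact ((hg.sub_right (Commute.one_right _)).sub_left (Commute.one_left _))

/-- total double summand -/
def DD {k : ℕ} (c : Clique I (k+2)) (r : RM σ I) (a b : σ) : F I k :=
  if h : a ∈ c.1 ∧ b ∈ c.1.erase a then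
    Finsupp.single (⟨(c.1.erase a).erase b, by
      constructor
      · rw [Finset.card_erase_of_mem h.2, Finset.card_erase_of_mem h.1, c.2.1]; omega
      · exact c.2.2.mono (by
          intro x hx
          exact Finset.mem_of_mem_erase (Finset.mem_of_mem_erase (by exact_mod_cast hx)))⟩ :
      Clique I k) (cfa I (c.1.erase a) b * (cfa I c.1 a * r))
  else 0

theorem erase_erase_comm (s : Finset σ) (a b : σ) :
    (s.erase a).erase b = (s.erase b).erase a := by
  ext x; simp only [Finset.mem_erase]; tauto

theorem single_cancel {k : ℕ} (S1 S2 : Clique I k) (X : RM σ I) (h : S1 = S2) :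
    Finsupp.single S1 (-X) + Finsupp.single S2 X = 0 := by
  subst h
  rw [Finsupp.single_neg, neg_add_cancel]

theorem del_del_single {k : ℕ} (c : Clique I (k+2)) (r : RM σ I) :
    del I k (del I (k+1) (Finsupp.single c r)) = 0 := by
  rw [del_single, map_sum]
  have step1 : ∀ j : Fin (k+2),
      del I k (Finsupp.single (erased c j) (cf I c j * r))
        = ∑ b ∈ c.1.erase (elt c j), DD I c r (elt c j) b := by
    intro j
    rw [del_single]
    have key : ∀ i : Fin (k+1),
        Finsupp.single (erased (erased c j) i) (cf I (erased c j) i * (cf I c j * r))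
          = DD I c r (elt c j) (elt (erased c j) i) := by
      intro i
      have hmem : elt (erased c j) i ∈ c.1.erase (elt c j) := elt_mem (erased c j) i
      rw [DD, dif_pos ⟨elt_mem c j, hmem⟩]
      congr 1
      rw [cf_eq_cfa, cf_eq_cfa]
      rfl
    rw [Finset.sum_congr rfl fun i _ => key i]
    exact sum_fin_to_finset I (erased c j) (fun b => DD I c r (elt c j) b)
  rw [Finset.sum_congr rfl fun j _ => step1 j]
  rw [sum_fin_to_finset I c (fun a => ∑ b ∈ c.1.erase a, DD I c r a b)]
  rw [Finset.sum_sigma']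
  apply Finset.sum_involution (fun p _ => (⟨p.2, p.1⟩ : Σ _ : σ, σ))
  · intro p hp
    rcases Finset.mem_sigma.1 hp with ⟨hp1, hp2⟩
    have hba : p.2 ∈ c.1 := Finset.mem_of_mem_erase hp2
    have hne : p.2 ≠ p.1 := Finset.ne_of_mem_erase hp2
    have hmem2 : p.1 ∈ c.1.erase p.2 := Finset.mem_erase.2 ⟨fun h => hne h.symm, hp1⟩
    show DD I c r p.1 p.2 + DD I c r p.2 p.1 = 0
    rw [DD, DD, dif_pos ⟨hp1, hp2⟩, dif_pos ⟨hba, hmem2⟩]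
    have hI : I p.2 p.1 := c.2.2 hba hp1 hne
    have hG := (gen_commute I hI).eq
    have cfa_mul_cfa : ∀ (s1 s2 : Finset σ) (a b : σ),
        cfa I s1 b * (cfa I s2 a * r)
          = ((-1:ℤ)^(idx s1 b) * (-1)^(idx s2 a)) •
              ((gen I b - 1) * ((gen I a - 1) * r)) := by
      intro s1 s2 a b
      rw [cfa, cfa, smul_mul_assoc, smul_mul_assoc, mul_smul_comm, smul_smul]
    have hv : cfa I (c.1.erase p.1) p.2 * (cfa I c.1 p.1 * r)
        = -(cfa I (c.1.erase p.2) p.1 * (cfa I c.1 p.2 * r)) := by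
      rw [cfa_mul_cfa, cfa_mul_cfa, ← mul_assoc ((gen I p.2) - 1), ← mul_assoc ((gen I p.1) - 1),
        hG, ← neg_smul]
      congr 1
      have := sgn_antisym (s := c.1) hp1 hba (fun h => hne h.symm)
      linarith
    rw [hv]
    exact single_cancel I _ _ _ (Subtype.ext (erase_erase_comm c.1 p.1 p.2))
  · intro p hp _
    rcases Finset.mem_sigma.1 hp with ⟨_, hp2⟩
    intro hEq
    have : p.2 = p.1 := congrArg Sigma.fst hEq
    exact Finset.ne_of_mem_erase hp2 this
  · intro p hp
    rcases Finset.mem_sigma.1 hp with ⟨hp1, hp2⟩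
    exact Finset.mem_sigma.2 ⟨Finset.mem_of_mem_erase hp2,
      Finset.mem_erase.2 ⟨fun h => Finset.ne_of_mem_erase hp2 h.symm, hp1⟩⟩
  · intro p _
    rfl

theorem del_del {k : ℕ} (x : F I (k+2)) : del I k (del I (k+1) x) = 0 := by
  induction x using Finsupp.induction with
  | zero => simp
  | single_add c r f _ _ ih => rw [map_add, map_add, del_del_single, ih, add_zero]

end PartB3



noncomputable section PartB4
variable {σ : Type*} [LinearOrder σ] [Fintype σ] (I : σ → σ → Prop)

/-- set of initial letters -/
def initials (t : TraceMonoid σ I) : Finset σ :=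
  Finset.univ.filter (fun a => Init I a t)

theorem mem_initials {t : TraceMonoid σ I} {a : σ} :
    a ∈ initials I t ↔ Init I a t := by
  simp [initials]

theorem initials_nonempty {t : TraceMonoid σ I} (ht : t ≠ 1) :
    (initials I t).Nonempty := by
  rcases init_of_ne_one ht with ⟨a, ha⟩
  exact ⟨a, (mem_initials I).2 ha⟩

/-- minimal initial letter -/
def minb (t : TraceMonoid σ I) (ht : t ≠ 1) : σ :=
  (initials I t).min' (initials_nonempty I ht)

theorem minb_init {t : TraceMonoid σ I} (ht : t ≠ 1) : Init I (minb I t ht) t :=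
  (mem_initials I).1 ((initials I t).min'_mem _)

theorem minb_le {t : TraceMonoid σ I} (ht : t ≠ 1) {a : σ} (ha : Init I a t) :
    minb I t ht ≤ a :=
  (initials I t).min'_le a ((mem_initials I).2 ha)

theorem tlen_clC {k : ℕ} (c : Clique I k) : tlen (clC I c) = k := by
  rw [clC, tlen_clF, c.2.1]

theorem init_of_mem {k : ℕ} (c : Clique I k) (t : TraceMonoid σ I) {a : σ} (ha : a ∈ c.1) :
    Init I a (clC I c * t) := init_clF_mul c.2.2 ha t

theorem clC_ne_one {k : ℕ} (c : Clique I (k+1)) (t : TraceMonoid σ I) :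
    clC I c * t ≠ 1 := by
  intro h
  have := congrArg tlen h
  rw [tlen_mul, tlen_clC, tlen_one] at this
  omega

variable (hsym : Symmetric I)

/-- the clique `c ∪ {b}` where `b` is the least initial letter of `clC c * t` -/
def insC {k : ℕ} (c : Clique I k) {t : TraceMonoid σ I} (hT : clC I c * t ≠ 1)
    (hb : minb I (clC I c * t) hT ∉ c.1) : Clique I (k+1) :=
  ⟨insert (minb I (clC I c * t) hT) c.1, by
    constructor
    · rw [Finset.card_insert_of_notMem hb, c.2.1]
    · intro x hx y hy hxy
      simp only [Finset.coe_insert, Set.mem_insert_iff] at hx hy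
      set b := minb I (clC I c * t) hT with hbdef
      have hbinit : Init I b (clC I c * t) := minb_init I hT
      rcases hx with rfl | hx <;> rcases hy with rfl | hy
      · exact absurd rfl hxy
      · exact init_comm hsym hbinit (init_of_mem I c t (by exact_mod_cast hy)) hxy
      · exact init_comm hsym (init_of_mem I c t (by exact_mod_cast hx)) hbinit hxy
      · exact c.2.2 hx hy hxy⟩

theorem insC_init {k : ℕ} (c : Clique I k) {t : TraceMonoid σ I} (hT : clC I c * t ≠ 1)
    (hb : minb I (clC I c * t) hT ∉ c.1) :
    ∀ a ∈ (insC I hsym c hT hb).1, Init I a (clC I c * t) := by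
  intro a ha
  rcases Finset.mem_insert.1 ha with rfl | ha
  · exact minb_init I hT
  · exact init_of_mem I c t ha

/-- the complement: `clC c * t = clC (insC c) * cmpl` -/
def cmpl {k : ℕ} (c : Clique I k) {t : TraceMonoid σ I} (hT : clC I c * t ≠ 1)
    (hb : minb I (clC I c * t) hT ∉ c.1) : TraceMonoid σ I :=
  Classical.choose (exists_extract hsym (insC I hsym c hT hb).2.2 (insC_init I hsym c hT hb))

theorem cmpl_spec {k : ℕ} (c : Clique I k) {t : TraceMonoid σ I} (hT : clC I c * t ≠ 1)
    (hb : minb I (clC I c * t) hT ∉ c.1) :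
    clC I c * t = clC I (insC I hsym c hT hb) * cmpl I hsym c hT hb :=
  Classical.choose_spec (exists_extract hsym (insC I hsym c hT hb).2.2 (insC_init I hsym c hT hb))

/-- the basic homotopy on basis elements -/
def h0def {k : ℕ} (c : Clique I k) (t : TraceMonoid σ I) : F I (k+1) :=
  if hT : clC I c * t = 1 then 0 else
  if hb : minb I (clC I c * t) hT ∈ c.1 then 0 else
  be I (insC I hsym c hT hb) (cmpl I hsym c hT hb)

/-- the basic homotopy -/
def h0 (k : ℕ) : F I k →ₗ[ℤ] F I (k+1) := MB I (h0def I hsym)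

theorem h0_be {k : ℕ} (c : Clique I k) (t : TraceMonoid σ I) :
    h0 I hsym k (be I c t) = h0def I hsym c t := MB_be ..

theorem clC_unique (hsym' : Symmetric I) {k : ℕ} (c : Clique I k) {m m' : TraceMonoid σ I}
    (h : clC I c * m = clC I c * m') : m = m' := cancel_left hsym' h

theorem clC_empty : clC I (emptyClique I) = 1 := by
  rw [clC]
  rfl

theorem clique0_eq (c : Clique I 0) : c = emptyClique I := by
  apply Subtype.ext
  rw [Finset.card_eq_zero.1 c.2.1]
  rfl

end PartB4



noncomputable section PartB5
variable {σ : Type*} [LinearOrder σ] [Fintype σ] (I : σ → σ → Prop) (hsym : Symmetric I)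

theorem idx_eq_zero {s : Finset σ} {b : σ} (h : ∀ x ∈ s, ¬ x < b) : idx s b = 0 := by
  rw [idx, Finset.filter_eq_empty_iff.2 h, Finset.card_empty]

theorem idx_insert_of_lt {s : Finset σ} {a b : σ} (hb : b ∉ s) (hba : b < a) :
    idx (insert b s) a = idx s a + 1 := by
  rw [idx, Finset.filter_insert, if_pos hba,
    Finset.card_insert_of_notMem (fun hmem => hb (Finset.filter_subset _ s hmem))]
  rfl

theorem commute_mkof_clC {k : ℕ} (c : Clique I k) {b : σ} (h : ∀ x ∈ c.1, I b x) :
    mkof I b * clC I c = clC I c * mkof I b :=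
  (clF_commute c.2.2 (fun x hx => mkof_commute (h x hx))).eq

theorem clC_erC_mul {k : ℕ} (c : Clique I (k+1)) {a : σ} (ha : a ∈ c.1)
    (t : TraceMonoid σ I) :
    clC I (erC I c a ha) * (mkof I a * t) = clC I c * t := by
  have hcomm : mkof I a * clC I (erC I c a ha) = clC I (erC I c a ha) * mkof I a := by
    apply commute_mkof_clC
    intro x hx
    exact c.2.2 (by exact_mod_cast ha)
      (by exact_mod_cast Finset.mem_of_mem_erase hx)
      (Finset.ne_of_mem_erase hx).symm
  rw [← mul_assoc, ← hcomm, ← clC_erC I c ha]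

theorem minb_congr {t1 t2 : TraceMonoid σ I} (h : t1 = t2) (h1 : t1 ≠ 1) (h2 : t2 ≠ 1) :
    minb I t1 h1 = minb I t2 h2 := by subst h; rfl

theorem h0def_zero_of_mem {k : ℕ} (c : Clique I k) (t : TraceMonoid σ I)
    (hT : clC I c * t ≠ 1) (hmem : minb I (clC I c * t) hT ∈ c.1) :
    h0def I hsym c t = 0 := by
  rw [h0def, dif_neg hT, dif_pos hmem]

theorem h0def_eq_be {k : ℕ} (c : Clique I k) (t : TraceMonoid σ I)
    (hT : clC I c * t ≠ 1) (hmem : minb I (clC I c * t) hT ∉ c.1) :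
    h0def I hsym c t = be I (insC I hsym c hT hmem) (cmpl I hsym c hT hmem) := by
  rw [h0def, dif_neg hT, dif_neg hmem]

/-- the fundamental homotopy identity on basis elements -/
theorem star {k : ℕ} (c : Clique I (k+1)) (t : TraceMonoid σ I) :
    d0 I (k+1) (h0 I hsym (k+1) (be I c t)) + h0 I hsym k (d0 I k (be I c t))
      = be I c t := by
  set T := clC I c * t with hTdef
  have hT : T ≠ 1 := clC_ne_one I c t
  set b := minb I T hT with hbdef
  have hbinit : Init I b T := minb_init I hT
  have hble : ∀ x ∈ c.1, b ≤ x := fun x hx => minb_le I hT (init_of_mem I c t hx)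
  have hT' : ∀ a (ha : a ∈ c.1), clC I (erC I c a ha) * (mkof I a * t) ≠ 1 := by
    intro a ha
    rw [clC_erC_mul I c ha t]
    exact hT
  have hminb' : ∀ a (ha : a ∈ c.1),
      minb I (clC I (erC I c a ha) * (mkof I a * t)) (hT' a ha) = b :=
    fun a ha => minb_congr I (clC_erC_mul I c ha t) _ _
  have hterm : ∀ a (ha : a ∈ c.1), h0 I hsym k (Dt I c t a)
      = ((-1:ℤ) ^ idx c.1 a) • h0def I hsym (erC I c a ha) (mkof I a * t) := by
    intro a ha
    rw [Dt, dif_pos ha, map_smul, h0_be]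
  rw [d0_be, map_sum]
  by_cases hb : b ∈ c.1
  · -- case A : the least initial letter lies in the clique
    have hzero : h0 I hsym (k+1) (be I c t) = 0 := by
      rw [h0_be, h0def_zero_of_mem I hsym c t hT hb]
    rw [hzero, map_zero, zero_add]
    have hsummand : ∀ a ∈ c.1, h0 I hsym k (Dt I c t a)
        = if a = b then be I c t else 0 := by
      intro a ha
      rw [hterm a ha]
      by_cases hab : a = b
      · rw [if_pos hab]
        have hbm : minb I (clC I (erC I c a ha) * (mkof I a * t)) (hT' a ha)
            ∉ (erC I c a ha).1 := by
          rw [hminb' a ha]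
          exact fun hmem => (Finset.mem_erase.1 hmem).1 hab.symm
        rw [h0def_eq_be I hsym _ _ (hT' a ha) hbm]
        have hclique : insC I hsym (erC I c a ha) (hT' a ha) hbm = c := by
          apply Subtype.ext
          show insert (minb I _ (hT' a ha)) ((c.1.erase a)) = c.1
          rw [hminb' a ha, ← hab]
          exact Finset.insert_erase ha
        have hcmpl : cmpl I hsym (erC I c a ha) (hT' a ha) hbm = t := by
          apply clC_unique I hsym c
          have hspec := (cmpl_spec I hsym (erC I c a ha) (hT' a ha) hbm).symm
          rw [hclique] at hspec
          rw [hspec, clC_erC_mul I c ha t]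
        rw [hclique, hcmpl]
        have hidx : idx c.1 a = 0 := by
          apply idx_eq_zero
          intro x hx
          apply not_lt.2
          rw [hab]
          exact hble x hx
        rw [hidx, pow_zero, one_smul]
      · rw [if_neg hab]
        have hbm : minb I (clC I (erC I c a ha) * (mkof I a * t)) (hT' a ha)
            ∈ (erC I c a ha).1 := by
          rw [hminb' a ha]
          exact Finset.mem_erase.2 ⟨fun h => hab h.symm, hb⟩
        rw [h0def_zero_of_mem I hsym _ _ (hT' a ha) hbm, smul_zero]
    rw [Finset.sum_congr rfl hsummand, Finset.sum_ite_eq' c.1 b (fun _ => be I c t),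
      if_pos hb]
  · -- case B : the least initial letter is new
    have hIbx : ∀ x ∈ c.1, I b x := by
      intro x hx
      exact init_comm hsym hbinit (init_of_mem I c t hx) (fun h => hb (h ▸ hx))
    have hbe : h0 I hsym (k+1) (be I c t) = be I (insC I hsym c hT hb) (cmpl I hsym c hT hb) := by
      rw [h0_be, h0def_eq_be]
    set cp := insC I hsym c hT hb with hcpdef
    set m' := cmpl I hsym c hT hb with hm'def
    have hcp1 : cp.1 = insert b c.1 := rfl
    have hspec : T = clC I cp * m' := cmpl_spec I hsym c hT hb
    have hclCcp : clC I cp = mkof I b * clC I c := clF_insert hb cp.2.2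
    have hbt : mkof I b * m' = t := by
      apply clC_unique I hsym c
      calc clC I c * (mkof I b * m') = (clC I c * mkof I b) * m' := (mul_assoc _ _ _).symm
        _ = (mkof I b * clC I c) * m' := by rw [commute_mkof_clC I c hIbx]
        _ = clC I cp * m' := by rw [hclCcp]
        _ = T := hspec.symm
        _ = clC I c * t := hTdef
    have hbmem : b ∈ cp.1 := Finset.mem_insert_self b c.1
    have htermb : Dt I cp m' b = be I c t := by
      rw [Dt, dif_pos hbmem]
      have h0idx : idx cp.1 b = 0 := by
        apply idx_eq_zero
        intro x hx
        rcases Finset.mem_insert.1 hx with rfl | hx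
        · exact lt_irrefl _
        · exact not_lt.2 (hble x hx)
      have hclq : erC I cp b hbmem = c := Subtype.ext (Finset.erase_insert hb)
      rw [h0idx, pow_zero, one_smul, hclq, hbt]
    have hterma : ∀ a ∈ c.1, Dt I cp m' a + h0 I hsym k (Dt I c t a) = 0 := by
      intro a ha
      have hab : b ≠ a := fun h => hb (h ▸ ha)
      have hba_lt : b < a := lt_of_le_of_ne (hble a ha) hab
      have hacp : a ∈ cp.1 := Finset.mem_insert_of_mem ha
      have hbm'' : minb I (clC I (erC I c a ha) * (mkof I a * t)) (hT' a ha)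
          ∉ (erC I c a ha).1 := by
        rw [hminb' a ha]
        exact fun hmem => hb (Finset.mem_of_mem_erase hmem)
      rw [hterm a ha, h0def_eq_be I hsym _ _ (hT' a ha) hbm'']
      set D := insC I hsym (erC I c a ha) (hT' a ha) hbm'' with hDdef
      have hD1 : D.1 = insert b (c.1.erase a) := by
        show insert (minb I _ (hT' a ha)) (c.1.erase a) = _
        rw [hminb' a ha]
      have hDcp : D = erC I cp a hacp := by
        apply Subtype.ext
        rw [hD1]
        show insert b (c.1.erase a) = (insert b c.1).erase a
        exact (Finset.erase_insert_of_ne hab).symm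
      have haD : a ∉ D.1 := by
        rw [hD1]
        intro hmem
        rcases Finset.mem_insert.1 hmem with h | h
        · exact hab h.symm
        · exact (Finset.mem_erase.1 h).1 rfl
      have hcpD : cp.1 = insert a D.1 := by
        rw [hD1, Finset.insert_comm, Finset.insert_erase ha]
        exact hcp1
      have hIax : ∀ x ∈ D.1, I a x := by
        intro x hx
        rw [hD1] at hx
        rcases Finset.mem_insert.1 hx with rfl | hx
        · exact init_comm hsym (init_of_mem I c t ha) hbinit (fun h => hb (h ▸ ha))
        · exact c.2.2 (by exact_mod_cast ha)
            (by exact_mod_cast Finset.mem_of_mem_erase hx)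
            (Finset.ne_of_mem_erase hx).symm
      have hclCD : clC I cp = mkof I a * clC I D := by
        rw [clC, clF_congr hcpD, clF_insert haD]
        rfl
      have hcmpl'' : cmpl I hsym (erC I c a ha) (hT' a ha) hbm'' = mkof I a * m' := by
        apply clC_unique I hsym D
        have h1 : clC I D * cmpl I hsym (erC I c a ha) (hT' a ha) hbm'' = T := by
          rw [← cmpl_spec I hsym (erC I c a ha) (hT' a ha) hbm'', clC_erC_mul I c ha t]
        rw [h1]
        calc T = clC I cp * m' := hspec
          _ = (mkof I a * clC I D) * m' := by rw [hclCD]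
          _ = (clC I D * mkof I a) * m' := by rw [commute_mkof_clC I D hIax]
          _ = clC I D * (mkof I a * m') := mul_assoc _ _ _
      rw [hcmpl'', hDcp]
      rw [Dt, dif_pos hacp]
      have hidxcp : idx cp.1 a = idx c.1 a + 1 := idx_insert_of_lt hb hba_lt
      rw [hidxcp, pow_succ, mul_neg_one, neg_smul, neg_add_cancel]
    rw [hbe, d0_be I cp m']
    have hsum1 : ∑ a ∈ cp.1, Dt I cp m' a = Dt I cp m' b + ∑ a ∈ c.1, Dt I cp m' a :=
      Finset.sum_insert hb
    rw [hsum1, htermb, add_assoc, ← Finset.sum_add_distrib,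
      Finset.sum_congr rfl hterma, Finset.sum_const_zero, add_zero]

end PartB5



noncomputable section PartB6
variable {σ : Type*} [LinearOrder σ] [Fintype σ] (I : σ → σ → Prop) (hsym : Symmetric I)

theorem star0 (t : TraceMonoid σ I) (ht : t ≠ 1) :
    d0 I 0 (h0 I hsym 0 (be I (emptyClique I) t)) = be I (emptyClique I) t := by
  have hT : clC I (emptyClique I) * t ≠ 1 := by
    rw [clC_empty, one_mul]; exact ht
  have hb : minb I (clC I (emptyClique I) * t) hT ∉ (emptyClique I).1 :=
    Finset.notMem_empty _
  rw [h0_be, h0def_eq_be I hsym _ _ hT hb]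
  set b := minb I (clC I (emptyClique I) * t) hT with hbdef
  set cp := insC I hsym (emptyClique I) hT hb with hcpdef
  set m' := cmpl I hsym (emptyClique I) hT hb with hm'def
  have hspec : clC I (emptyClique I) * t = clC I cp * m' :=
    cmpl_spec I hsym (emptyClique I) hT hb
  have hclCcp : clC I cp = mkof I b * clC I (emptyClique I) := clF_insert hb cp.2.2
  have hbt : mkof I b * m' = t := by
    rw [clC_empty, one_mul] at hspec
    rw [hclCcp, clC_empty, mul_one] at hspec
    exact hspec.symm
  rw [d0_be I cp m']
  have hbmem : b ∈ cp.1 := Finset.mem_insert_self b _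
  have hsum1 : ∑ a ∈ cp.1, Dt I cp m' a = Dt I cp m' b + ∑ a ∈ (∅ : Finset σ), Dt I cp m' a :=
    Finset.sum_insert (Finset.notMem_empty b)
  rw [hsum1, Finset.sum_empty, add_zero, Dt, dif_pos hbmem]
  have h0idx : idx cp.1 b = 0 := by
    apply idx_eq_zero
    intro x hx
    rcases Finset.mem_insert.1 hx with rfl | hx
    · exact lt_irrefl _
    · exact absurd hx (Finset.notMem_empty x)
  have hclq : erC I cp b hbmem = emptyClique I := clique0_eq I _
  rw [h0idx, pow_zero, one_smul, hclq, hbt]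

/-- All traces in the support of `x` satisfy `P` of their length. -/
def LenIn {k : ℕ} (P : ℕ → Prop) (x : F I k) : Prop :=
  ∀ (c : Clique I k) (t : TraceMonoid σ I), (x c).coeff t ≠ 0 → P (tlen t)

theorem lenIn_mono {k : ℕ} {P Q : ℕ → Prop} (h : ∀ n, P n → Q n) {x : F I k}
    (hx : LenIn I P x) : LenIn I Q x := fun c t hct => h _ (hx c t hct)

theorem lenIn_zero {k : ℕ} (P : ℕ → Prop) : LenIn I P (0 : F I k) := by
  intro c t h
  simp [Finsupp.zero_apply] at h

theorem lenIn_add {k : ℕ} {P : ℕ → Prop} {x y : F I k}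
    (hx : LenIn I P x) (hy : LenIn I P y) : LenIn I P (x + y) := by
  intro c t h
  rw [Finsupp.add_apply] at h
  by_cases h1 : (x c).coeff t = 0
  · by_cases h2 : (y c).coeff t = 0
    · rw [show ((x c + y c).coeff t) = (x c).coeff t + (y c).coeff t from rfl, h1, h2] at h
      simp at h
    · exact hy c t h2
  · exact hx c t h1

theorem lenIn_neg {k : ℕ} {P : ℕ → Prop} {x : F I k}
    (hx : LenIn I P x) : LenIn I P (-x) := by
  intro c t h
  apply hx c t
  intro h0
  apply h
  rw [Finsupp.neg_apply]
  rw [show ((-(x c)).coeff t) = -((x c).coeff t) from rfl, h0, neg_zero]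

theorem lenIn_sub {k : ℕ} {P : ℕ → Prop} {x y : F I k}
    (hx : LenIn I P x) (hy : LenIn I P y) : LenIn I P (x - y) := by
  rw [sub_eq_add_neg]
  exact lenIn_add I hx (lenIn_neg I hy)

theorem lenIn_smul {k : ℕ} {P : ℕ → Prop} {x : F I k} (z : ℤ)
    (hx : LenIn I P x) : LenIn I P (z • x) := by
  intro c t h
  apply hx c t
  intro h0
  apply h
  rw [Finsupp.smul_apply]
  rw [show ((z • (x c)).coeff t) = z • ((x c).coeff t) from rfl, h0, smul_zero]

theorem lenIn_single {k : ℕ} {P : ℕ → Prop} (c : Clique I k) (t : TraceMonoid σ I) (z : ℤ)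
    (ht : P (tlen t)) : LenIn I P (Finsupp.single c (MonoidAlgebra.single t z)) := by
  intro c' t' h
  by_cases hc : c = c'
  · subst hc
    rw [Finsupp.single_eq_same] at h
    by_cases htt : t = t'
    · exact htt ▸ ht
    · exact absurd (by rw [MonoidAlgebra.coeff_single]; exact Finsupp.single_eq_of_ne' htt) h
  · rw [Finsupp.single_eq_of_ne' hc] at h
    exact absurd rfl h

theorem lenIn_be {k : ℕ} {P : ℕ → Prop} (c : Clique I k) (t : TraceMonoid σ I)
    (ht : P (tlen t)) : LenIn I P (be I c t) := lenIn_single I c t 1 ht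

theorem lenIn_sum {k : ℕ} {P : ℕ → Prop} {α : Type*} (s : Finset α) (f : α → F I k)
    (h : ∀ i ∈ s, LenIn I P (f i)) : LenIn I P (∑ i ∈ s, f i) := by
  classical
  induction s using Finset.induction_on with
  | empty => simpa using lenIn_zero I P
  | @insert a s ha ih =>
    rw [Finset.sum_insert ha]
    exact lenIn_add I (h a (Finset.mem_insert_self a s))
      (ih fun i hi => h i (Finset.mem_insert_of_mem hi))

/-- basis induction with a support condition -/
theorem lenIn_induction {k : ℕ} {P : ℕ → Prop} {p : F I k → Prop}
    (hz : p 0) (hadd : ∀ x y, p x → p y → p (x + y))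
    (hs : ∀ (c : Clique I k) (t : TraceMonoid σ I) (z : ℤ), z ≠ 0 → P (tlen t) →
      p (Finsupp.single c (MonoidAlgebra.single t z))) :
    ∀ x : F I k, LenIn I P x → p x := by
  have inner : ∀ (c : Clique I k) (r : RM σ I),
      (∀ t, r.coeff t ≠ 0 → P (tlen t)) → p (Finsupp.single c r) := by
    intro c r
    induction r using MonoidAlgebra.induction with
    | zero =>
      intro _
      rw [Finsupp.single_zero]
      exact hz
    | single_add t z g htg hz' ih =>
      intro hr
      rw [Finsupp.single_add]
      apply hadd
      · apply hs c t z hz'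
        apply hr
        rw [show ((MonoidAlgebra.single t z + g).coeff t) = Finsupp.single t z t + g.coeff t from rfl,
          Finsupp.single_eq_same, Finsupp.notMem_support_iff.1 htg, add_zero]
        exact hz'
      · apply ih
        intro t' ht'
        apply hr
        have htt' : t ≠ t' := by
          intro h
          subst h
          exact ht' (Finsupp.notMem_support_iff.1 htg)
        rw [show ((MonoidAlgebra.single t z + g).coeff t') = Finsupp.single t z t' + g.coeff t' from rfl,
          Finsupp.single_eq_of_ne' htt', zero_add]
        exact ht'
  intro x
  induction x using Finsupp.induction with
  | zero => intro _; exact hz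
  | single_add c r f hcf hr ih =>
    intro hx
    apply hadd
    · apply inner c r
      intro t ht
      apply hx c t
      rw [Finsupp.add_apply, Finsupp.single_eq_same, Finsupp.notMem_support_iff.1 hcf, add_zero]
      exact ht
    · apply ih
      intro c' t' hct'
      apply hx c' t'
      have hcc' : c ≠ c' := by
        intro h
        subst h
        rw [Finsupp.notMem_support_iff.1 hcf] at hct'
        exact hct' rfl
      rw [Finsupp.add_apply, Finsupp.single_eq_of_ne' hcc', zero_add]
      exact hct'

theorem single_eq_smul_be {k : ℕ} (c : Clique I k) (t : TraceMonoid σ I) (z : ℤ) :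
    Finsupp.single c (MonoidAlgebra.single t z) = z • be I c t := by
  rw [be, Finsupp.smul_single, MonoidAlgebra.smul_single', mul_one]

theorem lenIn_map {k k' : ℕ} (L : F I k →ₗ[ℤ] F I k') {P Q : ℕ → Prop}
    (hL : ∀ c t, P (tlen t) → LenIn I Q (L (be I c t))) (x : F I k)
    (hx : LenIn I P x) : LenIn I Q (L x) := by
  refine lenIn_induction I (p := fun x => LenIn I Q (L x)) ?_ ?_ ?_ x hx
  · show LenIn I Q (L 0)
    rw [map_zero]; exact lenIn_zero I Q
  · intro x y h1 h2
    show LenIn I Q (L (x + y))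
    rw [map_add]
    exact lenIn_add I h1 h2
  · intro c t z _ hP
    show LenIn I Q (L _)
    rw [single_eq_smul_be, map_smul]
    exact lenIn_smul I z (hL c t hP)

theorem lenIn_eqmap {k k' : ℕ} (L L' : F I k →ₗ[ℤ] F I k') {P : ℕ → Prop}
    (hL : ∀ c t, P (tlen t) → L (be I c t) = L' (be I c t)) (x : F I k)
    (hx : LenIn I P x) : L x = L' x := by
  refine lenIn_induction I (p := fun x => L x = L' x) ?_ ?_ ?_ x hx
  · show L 0 = L' 0
    rw [map_zero, map_zero]
  · intro x y h1 h2
    show L (x + y) = L' (x + y)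
    rw [map_add, map_add, h1, h2]
  · intro c t z _ hP
    show L _ = L' _
    rw [single_eq_smul_be, map_smul, map_smul, hL c t hP]

theorem lenIn_d0 {k : ℕ} {P : ℕ → Prop} (x : F I (k+1)) (hx : LenIn I P x) :
    LenIn I (fun n => ∃ m, P m ∧ n = m + 1) (d0 I k x) := by
  refine lenIn_map I (d0 I k) (P := P) (Q := fun n => ∃ m, P m ∧ n = m + 1) ?_ x hx
  intro c t hP
  rw [d0, MB_be]
  apply lenIn_sum
  intro j _
  apply lenIn_smul
  apply lenIn_be
  exact ⟨tlen t, hP, by rw [tlen_mul, tlen_mkof]; omega⟩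

theorem lenIn_d1 {k : ℕ} {P : ℕ → Prop} (x : F I (k+1)) (hx : LenIn I P x) :
    LenIn I P (d1 I k x) := by
  refine lenIn_map I (d1 I k) (P := P) (Q := P) ?_ x hx
  intro c t hP
  rw [d1, MB_be]
  apply lenIn_sum
  intro j _
  exact lenIn_smul I _ (lenIn_be I _ _ hP)

theorem lenIn_h0 {k : ℕ} {P : ℕ → Prop} (x : F I k) (hx : LenIn I P x) :
    LenIn I (fun n => P (n+1)) (h0 I hsym k x) := by
  refine lenIn_map I (h0 I hsym k) (P := P) (Q := fun n => P (n+1)) ?_ x hx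
  intro c t hP
  rw [h0_be, h0def]
  split
  · exact lenIn_zero I _
  · split
    · exact lenIn_zero I _
    · rename_i hT hb
      apply lenIn_be
      have hlen := congrArg tlen (cmpl_spec I hsym c hT hb)
      rw [tlen_mul, tlen_mul, tlen_clC, tlen_clC] at hlen
      have : tlen (cmpl I hsym c hT hb) + 1 = tlen t := by omega
      rw [show tlen (cmpl I hsym c hT hb) + 1 = tlen t from this]
      exact hP

/-- the part of `x` of trace length exactly `n` -/
def topPart (n : ℕ) {k : ℕ} (x : F I k) : F I k :=
  Finsupp.mapRange (fun r : RM σ I => MonoidAlgebra.ofCoeff (Finsupp.filter (fun t => tlen t = n) r.coeff))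
    (by rw [MonoidAlgebra.coeff_zero, Finsupp.filter_zero, MonoidAlgebra.ofCoeff_zero]) x

theorem topPart_apply (n : ℕ) {k : ℕ} (x : F I k) (c : Clique I k) (t : TraceMonoid σ I) :
    (topPart I n x c).coeff t = if tlen t = n then (x c).coeff t else 0 := by
  rw [topPart, Finsupp.mapRange_apply]
  exact Finsupp.filter_apply _ _ _

theorem lenIn_topPart (n : ℕ) {k : ℕ} (x : F I k) : LenIn I (· = n) (topPart I n x) := by
  intro c t h
  rw [topPart_apply] at h
  by_cases hn : tlen t = n
  · exact hn
  · rw [if_neg hn] at h; exact absurd rfl h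

theorem lenIn_rest (n : ℕ) {k : ℕ} (x : F I k) (hx : LenIn I (· < n + 1) x) :
    LenIn I (· < n) (x - topPart I n x) := by
  intro c t h
  rw [Finsupp.sub_apply] at h
  have h' : (x c).coeff t - (topPart I n x c).coeff t ≠ 0 := h
  rw [topPart_apply] at h'
  by_cases hn : tlen t = n
  · rw [if_pos hn, sub_self] at h'
    exact absurd rfl h'
  · rw [if_neg hn, sub_zero] at h'
    have := hx c t h'
    omega

theorem F_ext_zero {k : ℕ} (x : F I k) (h : ∀ c t, (x c).coeff t = 0) : x = 0 := by
  ext c t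
  exact h c t

theorem eq_zero_of_lenIn_lt_zero {k : ℕ} (x : F I k) (h : LenIn I (· < 0) x) : x = 0 := by
  apply F_ext_zero
  intro c t
  by_contra hct
  exact absurd (h c t hct) (by omega)

theorem exists_lenIn_bound {k : ℕ} (x : F I k) : ∃ n, LenIn I (· < n) x := by
  refine ⟨(x.support.sup fun c => (x c).coeff.support.sup tlen) + 1, ?_⟩
  intro c t h
  have hc : c ∈ x.support := by
    rw [Finsupp.mem_support_iff]
    intro h0
    apply h
    rw [h0]
    rfl
  have ht : t ∈ (x c).coeff.support := Finsupp.mem_support_iff.2 h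
  have h1 : tlen t ≤ (x c).coeff.support.sup tlen := Finset.le_sup ht
  have h2 : (x c).coeff.support.sup tlen ≤ x.support.sup fun c => (x c).coeff.support.sup tlen :=
    Finset.le_sup (f := fun c => (x c).coeff.support.sup tlen) hc
  omega

end PartB6



noncomputable section PartB7
variable {σ : Type*} [LinearOrder σ] [Fintype σ] (I : σ → σ → Prop)

theorem lift_one_single (t : TraceMonoid σ I) (z : ℤ) :
    (MonoidAlgebra.lift ℤ ℤ (TraceMonoid σ I) (1 : TraceMonoid σ I →* ℤ))
      (MonoidAlgebra.single t z) = z := by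
  rw [MonoidAlgebra.lift_single]
  simp

theorem aug_zero : aug I (0 : F I 0) = 0 := by
  rw [aug]
  rw [show ((0 : F I 0) (emptyClique I)) = 0 from rfl, map_zero]

theorem aug_add (x y : F I 0) : aug I (x + y) = aug I x + aug I y := by
  rw [aug, aug, aug, Finsupp.add_apply, map_add]

theorem aug_sub (x y : F I 0) : aug I (x - y) = aug I x - aug I y := by
  rw [aug, aug, aug, Finsupp.sub_apply, map_sub]

theorem aug_single (c : Clique I 0) (t : TraceMonoid σ I) (z : ℤ) :
    aug I (Finsupp.single c (MonoidAlgebra.single t z)) = z := by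
  rw [clique0_eq I c, aug, Finsupp.single_eq_same]
  exact lift_one_single I t z

theorem aug_surj : Function.Surjective (aug I) := by
  intro z
  exact ⟨Finsupp.single (emptyClique I) (MonoidAlgebra.single 1 z), aug_single I _ _ _⟩

theorem aug_del (y : F I 1) : aug I (del I 0 y) = 0 := by
  induction y using Finsupp.induction with
  | zero => rw [map_zero]; exact aug_zero I
  | single_add c r f _ _ ih =>
    rw [map_add, aug_add, ih, add_zero, del_single, Fin.sum_univ_one]
    rw [clique0_eq I (erased c 0), aug, Finsupp.single_eq_same]
    set eh := MonoidAlgebra.lift ℤ ℤ (TraceMonoid σ I) (1 : TraceMonoid σ I →* ℤ) with hehdef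
    show eh (cf I c 0 * r) = 0
    rw [map_mul eh]
    have hcf : cf I c 0 = gen I (elt c 0) - 1 := by
      rw [cf]
      norm_num
    have h1 : eh (cf I c 0) = 0 := by
      rw [hcf, map_sub eh, map_one eh, gen_eq]
      rw [show eh (MonoidAlgebra.single (mkof I (elt c 0)) 1) = 1 from lift_one_single I _ _]
      ring
    rw [h1, zero_mul]

theorem eq_zero_of_small (x : F I 0) (h : LenIn I (· < 1) x) (haug : aug I x = 0) :
    x = 0 := by
  have hval : ∀ t, t ≠ 1 → (x (emptyClique I)).coeff t = 0 := by
    intro t ht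
    by_contra hct
    have := h (emptyClique I) t hct
    exact ht (eq_one_of_tlen_eq_zero (by omega))
  have hsupp : x (emptyClique I)
      = MonoidAlgebra.single 1 ((x (emptyClique I)).coeff 1) := by
    ext t'
    by_cases ht' : t' = 1
    · subst ht'
      rw [MonoidAlgebra.coeff_single, Finsupp.single_eq_same]
    · rw [MonoidAlgebra.coeff_single, Finsupp.single_eq_of_ne' (fun h => ht' h.symm), hval t' ht']
  have hv : (x (emptyClique I)).coeff 1 = 0 := by
    have : aug I x = (x (emptyClique I)).coeff 1 := by
      rw [aug, hsupp, MonoidAlgebra.lift_single]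
      simp
    omega
  apply F_ext_zero
  intro c t
  rw [clique0_eq I c, hsupp, hv, MonoidAlgebra.single_zero]
  rfl

theorem exact_higher (hsym : Symmetric I) (k : ℕ) : ∀ (n : ℕ) (x : F I (k+1)), LenIn I (· < n) x →
    del I k x = 0 → ∃ y : F I (k+2), del I (k+1) y = x := by
  intro n
  induction n with
  | zero =>
    intro x hx _
    exact ⟨0, by rw [map_zero, eq_zero_of_lenIn_lt_zero I x hx]⟩
  | succ n ih =>
    intro x hx hdel
    set xt := topPart I n x with hxt
    have hLt := lenIn_topPart I n x
    have hLr := lenIn_rest I n x hx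
    have hx_split : x = xt + (x - xt) := by abel
    have hd0 : d0 I k x = d1 I k x := by
      have h := del_eq_d0_sub_d1 I x
      rw [hdel] at h
      exact sub_eq_zero.1 h.symm
    have hd0xt : d0 I k xt = d1 I k x - d0 I k (x - xt) := by
      have h : d0 I k xt + d0 I k (x - xt) = d1 I k x := by
        rw [← map_add, ← hx_split, hd0]
      exact eq_sub_of_add_eq h
    have hLHS : LenIn I (· = n + 1) (d0 I k xt) :=
      lenIn_mono I (fun m hm => by rcases hm with ⟨m', h1, h2⟩; omega)
        (lenIn_d0 I xt hLt)
    have hRHS : LenIn I (· < n + 1) (d1 I k x - d0 I k (x - xt)) := by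
      apply lenIn_sub I (lenIn_d1 I x hx)
      exact lenIn_mono I (fun m hm => by rcases hm with ⟨m', h1, h2⟩; omega)
        (lenIn_d0 I (x - xt) hLr)
    have hzero : d0 I k xt = 0 := by
      apply F_ext_zero
      intro c t
      by_contra hct
      have h1 := hLHS c t hct
      have hct' : ((d1 I k x - d0 I k (x - xt)) c).coeff t ≠ 0 := by
        rw [← hd0xt]; exact hct
      have h2 := hRHS c t hct'
      omega
    have hstar : ∀ y : F I (k+1),
        d0 I (k+1) (h0 I hsym (k+1) y) + h0 I hsym k (d0 I k y) = y := by
      intro y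
      have h := lenIn_eqmap I
        ((d0 I (k+1)).comp (h0 I hsym (k+1)) + (h0 I hsym k).comp (d0 I k))
        LinearMap.id (P := fun _ => True) ?_ y (fun _ _ _ => trivial)
      · simpa using h
      · intro c t _
        simpa using star I hsym c t
    have hxt_eq : d0 I (k+1) (h0 I hsym (k+1) xt) = xt := by
      have h := hstar xt
      rw [hzero, map_zero, add_zero] at h
      exact h
    set y0 := h0 I hsym (k+1) xt with hy0def
    have hdel_y0 : del I (k+1) y0 = xt - d1 I (k+1) y0 := by
      rw [del_eq_d0_sub_d1, hxt_eq]
    set x' := x - del I (k+1) y0 with hx'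
    have hx'eq : x' = (x - xt) + d1 I (k+1) y0 := by
      rw [hx', hdel_y0]; abel
    have hLx' : LenIn I (· < n) x' := by
      rw [hx'eq]
      apply lenIn_add I hLr
      have hy0 : LenIn I (fun m => m + 1 = n) y0 := lenIn_h0 I hsym xt hLt
      exact lenIn_mono I (fun m hm => by omega) (lenIn_d1 I y0 hy0)
    have hdelx' : del I k x' = 0 := by
      rw [hx', map_sub, hdel, del_del I y0, sub_zero]
    rcases ih x' hLx' hdelx' with ⟨y1, hy1⟩
    refine ⟨y0 + y1, ?_⟩
    rw [map_add, hy1, hx']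
    abel

theorem exact_zero (hsym : Symmetric I) : ∀ (n : ℕ) (x : F I 0), LenIn I (· < n) x →
    aug I x = 0 → ∃ y : F I 1, del I 0 y = x := by
  intro n
  induction n with
  | zero =>
    intro x hx _
    exact ⟨0, by rw [map_zero, eq_zero_of_lenIn_lt_zero I x hx]⟩
  | succ n ih =>
    intro x hx haug
    by_cases hn : n = 0
    · subst hn
      exact ⟨0, by rw [map_zero, eq_zero_of_small I x hx haug]⟩
    set xt := topPart I n x with hxt
    have hLt := lenIn_topPart I n x
    have hLr := lenIn_rest I n x hx
    have hxt_eq : d0 I 0 (h0 I hsym 0 xt) = xt := by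
      have h := lenIn_eqmap I ((d0 I 0).comp (h0 I hsym 0))
        LinearMap.id (P := (· = n)) ?_ xt hLt
      · simpa using h
      · intro c t hP
        have ht : t ≠ 1 := by
          intro h1
          rw [h1, tlen_one] at hP
          omega
        rw [clique0_eq I c]
        simpa using star0 I hsym t ht
    set y0 := h0 I hsym 0 xt with hy0def
    have hdel_y0 : del I 0 y0 = xt - d1 I 0 y0 := by
      rw [del_eq_d0_sub_d1, hxt_eq]
    set x' := x - del I 0 y0 with hx'
    have hx'eq : x' = (x - xt) + d1 I 0 y0 := by
      rw [hx', hdel_y0]; abel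
    have hLx' : LenIn I (· < n) x' := by
      rw [hx'eq]
      apply lenIn_add I hLr
      have hy0 : LenIn I (fun m => m + 1 = n) y0 := lenIn_h0 I hsym xt hLt
      exact lenIn_mono I (fun m hm => by omega) (lenIn_d1 I y0 hy0)
    have haug' : aug I x' = 0 := by
      rw [hx', aug_sub, haug, aug_del I y0, sub_zero]
    rcases ih x' hLx' haug' with ⟨y1, hy1⟩
    refine ⟨y0 + y1, ?_⟩
    rw [map_add, hy1, hx']
    abel

end PartB7


/-- **Theorem 2.3.** For a free partially commutative monoid `M = M(Σ, I)` with `Σ`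
finite and totally ordered, the sequence
`⋯ → F_n →^{δ_n} ⋯ → F_1 →^{δ_1} F_0 = ℤM →^{ε} ℤ → 0`
is exact, i.e. it is a free resolution of the trivial right `ℤM`-module `ℤ`. -/
theorem resolution_exact {σ : Type*} [Fintype σ] [LinearOrder σ] (I : σ → σ → Prop)
    (hsym : Symmetric I) (hirr : Irreflexive I) :
    Function.Surjective (aug I) ∧ Function.Exact (del I 0) (aug I) ∧
      ∀ k : ℕ, Function.Exact (del I (k + 1)) (del I k) := by
  refine ⟨aug_surj I, ?_, ?_⟩
  · intro y
    simp only [Set.mem_range]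
    constructor
    · intro hy
      rcases exists_lenIn_bound I y with ⟨n, hn⟩
      exact exact_zero I hsym n y hn hy
    · rintro ⟨x, rfl⟩
      exact aug_del I x
  · intro k y
    simp only [Set.mem_range]
    constructor
    · intro hy
      rcases exists_lenIn_bound I y with ⟨n, hn⟩
      exact exact_higher I hsym k n y hn hy
    · rintro ⟨x, rfl⟩
      exact del_del I x
end

section
/- Let M = M(Σ,I) be a free partially commutative monoid with Σ finite and totally ordered. Then for every k ≥ 2 the composite δ_{k−1} ∘ δ_k : F_k → F_{k−2} is zero, and ε ∘ δ_1 = 0; i.e., the sequence of modules F_k with the maps δ_k and augmentation ε is a chain complex. -/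
open scoped Classical

section AuxPCM

variable {σ : Type*} [LinearOrder σ]

lemma gen_comm {I : σ → σ → Prop} {a b : σ} (h : I a b) :
    gen I a * gen I b = gen I b * gen I a := by
  have key : TraceMonoid.mk I (FreeMonoid.of a) * TraceMonoid.mk I (FreeMonoid.of b)
      = TraceMonoid.mk I (FreeMonoid.of b) * TraceMonoid.mk I (FreeMonoid.of a) := by
    rw [← map_mul, ← map_mul]
    exact Quotient.sound (ConGen.Rel.of _ _ ⟨a, b, h, rfl, rfl⟩)
  simp only [gen, ← map_mul, key]

lemma elt_eq_orderEmbOfFin {I : σ → σ → Prop} {k : ℕ} (c : Clique I k) (j : Fin k) :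
    elt c j = c.1.orderEmbOfFin c.2.1 j :=
  Finset.coe_orderIsoOfFin_apply _ _ _

lemma elt_strictMono {I : σ → σ → Prop} {k : ℕ} (c : Clique I k) : StrictMono (elt c) := by
  have : elt c = c.1.orderEmbOfFin c.2.1 := funext (elt_eq_orderEmbOfFin c)
  rw [this]
  exact (c.1.orderEmbOfFin c.2.1).strictMono

lemma elt_injective {I : σ → σ → Prop} {k : ℕ} (c : Clique I k) : Function.Injective (elt c) :=
  (elt_strictMono c).injective

lemma elt_erased {I : σ → σ → Prop} {k : ℕ} (c : Clique I (k + 1)) (j : Fin (k + 1))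
    (i : Fin k) : elt (erased c j) i = elt c (j.succAbove i) := by
  have hmem : ∀ x : Fin k, elt c (j.succAbove x) ∈ (erased c j).1 := fun x =>
    Finset.mem_erase.2 ⟨(elt_injective c).ne (j.succAbove_ne x), elt_mem c _⟩
  have hmono : StrictMono (fun x : Fin k => elt c (j.succAbove x)) :=
    (elt_strictMono c).comp (Fin.strictMono_succAbove j)
  have hu := Finset.orderEmbOfFin_unique (erased c j).2.1 hmem hmono
  rw [elt_eq_orderEmbOfFin, ← hu]

lemma fin_succAbove_val {n : ℕ} (p : Fin (n + 1)) (i : Fin n) :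
    (p.succAbove i : ℕ) = if (i : ℕ) < (p : ℕ) then (i : ℕ) else (i : ℕ) + 1 := by
  by_cases h : (i : ℕ) < (p : ℕ)
  · rw [Fin.succAbove_of_castSucc_lt p i (by simpa [Fin.lt_def] using h)]
    simp [h]
  · rw [Fin.succAbove_of_le_castSucc p i (by simpa [Fin.le_def] using not_lt.1 h)]
    simp [h]

lemma fin_predAbove_val {n : ℕ} (p : Fin n) (i : Fin (n + 1)) :
    (p.predAbove i : ℕ) = if (p : ℕ) < (i : ℕ) then (i : ℕ) - 1 else (i : ℕ) := by
  by_cases h : (p : ℕ) < (i : ℕ)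
  · rw [Fin.predAbove_of_castSucc_lt p i (by simpa [Fin.lt_def] using h)]
    simp [h]
  · rw [Fin.predAbove_of_le_castSucc p i (by simpa [Fin.le_def] using not_lt.1 h)]
    simp [h]

lemma fin_key {n : ℕ} (j : Fin (n + 2)) (i : Fin (n + 1)) :
    (j.succAbove i).succAbove (i.predAbove j) = j ∧
    (i.predAbove j).predAbove (j.succAbove i) = i ∧
    (((i.predAbove j : ℕ) + ((j.succAbove i : Fin (n + 2)) : ℕ)) + 1 = (i : ℕ) + (j : ℕ) ∨
      (i : ℕ) + (j : ℕ) + 1 = ((i.predAbove j : ℕ) + ((j.succAbove i : Fin (n + 2)) : ℕ))) := by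
  have hi := i.isLt
  have hj := j.isLt
  refine ⟨Fin.ext ?_, Fin.ext ?_, ?_⟩ <;>
  · simp only [fin_succAbove_val, fin_predAbove_val]
    split_ifs <;> omega

lemma mul_neg_one_pow_mul {R : Type*} [Ring R] (n : ℕ) (u z : R) :
    u * ((-1 : R) ^ n * z) = (-1 : R) ^ n * (u * z) := by
  rw [← mul_assoc, ← ((Commute.neg_one_left u).pow_left n).eq, mul_assoc]

lemma sub_one_mul_sub_one_comm {R : Type*} [Ring R] {x y : R} (h : x * y = y * x) :
    (x - 1) * (y - 1) = (y - 1) * (x - 1) := by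
  calc (x - 1) * (y - 1) = x * y - x - y + 1 := by noncomm_ring
    _ = y * x - y - x + 1 := by rw [h]; abel
    _ = (y - 1) * (x - 1) := by noncomm_ring

lemma coeff_cancel {R : Type*} [Ring R] (X Y r : R) (h : X * Y = Y * X) (a b a' b' : ℕ)
    (hpar : a' + b' + 1 = a + b ∨ a + b + 1 = a' + b') :
    ((-1 : R) ^ a * X) * (((-1 : R) ^ b * Y) * r)
      + ((-1 : R) ^ a' * Y) * (((-1 : R) ^ b' * X) * r) = 0 := by
  have move : ∀ (m m' : ℕ) (U V : R), ((-1 : R) ^ m * U) * (((-1 : R) ^ m' * V) * r)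
      = (-1 : R) ^ (m + m') * (U * (V * r)) := by
    intro m m' U V
    rw [mul_assoc ((-1 : R) ^ m') V r, mul_assoc ((-1 : R) ^ m) U _,
      mul_neg_one_pow_mul m' U (V * r), ← mul_assoc, ← pow_add]
  rw [move, move]
  have hXY : X * (Y * r) = Y * (X * r) := by rw [← mul_assoc, h, mul_assoc]
  rw [hXY, ← add_mul]
  rcases hpar with hp | hp
  · rw [← hp, pow_succ]
    simp
  · rw [← hp, pow_succ]
    simp

lemma elt_comm {I : σ → σ → Prop} {k : ℕ} (c : Clique I k) {j q : Fin k} (h : j ≠ q) :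
    gen I (elt c j) * gen I (elt c q) = gen I (elt c q) * gen I (elt c j) :=
  gen_comm (c.2.2 (elt_mem c j) (elt_mem c q) ((elt_injective c).ne h))

lemma clique_zero_eq {I : σ → σ → Prop} (c : Clique I 0) : c = emptyClique I :=
  Subtype.ext (Finset.card_eq_zero.mp c.2.1)

end AuxPCM

/-- For a free partially commutative monoid `M = M(Σ, I)` with `Σ` finite and totally
ordered, the maps `δ_k` together with the augmentation `ε` form a chain complex:
`δ_{k-1} ∘ δ_k = 0` for every `k ≥ 2`, and `ε ∘ δ₁ = 0`. -/
theorem resolution_is_complex {σ : Type*} [Fintype σ] [LinearOrder σ] (I : σ → σ → Prop)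
    (hsym : Symmetric I) (hirr : Irreflexive I) :
    (∀ k : ℕ, (del I k).comp (del I (k + 1)) = 0) ∧
      ∀ x : F I 1, aug I (del I 0 x) = 0 := by
  constructor
  · intro k
    apply Finsupp.lhom_ext
    intro c r
    rw [LinearMap.comp_apply, LinearMap.zero_apply]
    have h1 : del I (k + 1) (Finsupp.single c r)
        = ∑ j : Fin (k + 2), Finsupp.single (erased c j)
            (((-1 : RM σ I) ^ (j : ℕ) * (gen I (elt c j) - 1)) * r) := by
      rw [del, Finsupp.lsum_single]
      simp only [LinearMap.sum_apply, LinearMap.coe_comp, Function.comp_apply,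
        Finsupp.lsingle_apply, LinearMap.mulLeft_apply]
    rw [h1, map_sum]
    have h2 : ∀ j : Fin (k + 2),
        del I k (Finsupp.single (erased c j) (((-1 : RM σ I) ^ (j : ℕ) * (gen I (elt c j) - 1)) * r))
        = ∑ i : Fin (k + 1), Finsupp.single (erased (erased c j) i)
            (((-1 : RM σ I) ^ (i : ℕ) * (gen I (elt (erased c j) i) - 1)) *
              (((-1 : RM σ I) ^ (j : ℕ) * (gen I (elt c j) - 1)) * r)) := by
      intro j
      rw [del, Finsupp.lsum_single]
      simp only [LinearMap.sum_apply, LinearMap.coe_comp, Function.comp_apply,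
        Finsupp.lsingle_apply, LinearMap.mulLeft_apply]
    simp only [h2]
    rw [← Finset.sum_product']
    refine Finset.sum_involution
      (fun p _ => (p.1.succAbove p.2, p.2.predAbove p.1)) ?_ ?_
      (fun p _ => Finset.mem_product.2 ⟨Finset.mem_univ _, Finset.mem_univ _⟩) ?_
    · rintro ⟨j, i⟩ -
      obtain ⟨hk1, hk2, hk3⟩ := fin_key j i
      set q := j.succAbove i with hq
      set i' := i.predAbove j with hi'
      have hqj : q ≠ j := j.succAbove_ne i
      have he1 : elt (erased c j) i = elt c q := elt_erased c j i
      have he2 : elt (erased c q) i' = elt c j := by rw [elt_erased, hk1]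
      have hclique : erased (erased c j) i = erased (erased c q) i' := by
        apply Subtype.ext
        show ((c.1.erase (elt c j)).erase (elt (erased c j) i))
          = ((c.1.erase (elt c q)).erase (elt (erased c q) i'))
        rw [he1, he2, Finset.erase_right_comm]
      rw [hclique, he1, he2, ← Finsupp.single_add,
        coeff_cancel _ _ r (sub_one_mul_sub_one_comm (elt_comm c hqj)) _ _ _ _ hk3,
        Finsupp.single_zero]
    · rintro ⟨j, i⟩ - -
      intro hgp
      exact j.succAbove_ne i (congrArg Prod.fst hgp)
    · rintro ⟨j, i⟩ -
      obtain ⟨hk1, hk2, -⟩ := fin_key j i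
      exact Prod.ext hk1 hk2
  · intro x
    have haug_add : ∀ u v : F I 0, aug I (u + v) = aug I u + aug I v := by
      intro u v
      simp [aug, Finsupp.add_apply, map_add]
    induction x using Finsupp.induction_linear with
    | zero => simp [aug, map_zero]
    | add f g hf hg => rw [map_add, haug_add, hf, hg, add_zero]
    | single c r =>
      have hc : erased c 0 = emptyClique I := clique_zero_eq _
      have h1 : del I 0 (Finsupp.single c r)
          = Finsupp.single (emptyClique I) ((gen I (elt c 0) - 1) * r) := by
        rw [del, Finsupp.lsum_single]
        simp only [LinearMap.sum_apply, LinearMap.coe_comp, Function.comp_apply,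
          Finsupp.lsingle_apply, LinearMap.mulLeft_apply, Fin.sum_univ_succ,
          Finset.univ_eq_empty, Finset.sum_empty, add_zero, Fin.val_zero, pow_zero, one_mul, hc]
      rw [h1]
      simp [aug, gen, Finsupp.single_eq_same, map_mul, map_sub, map_one,
        MonoidAlgebra.lift_of]
end
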